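/- arXiv:0810.4502 — 7 statements merged into one kernel-verified Lean document; each statement's English description precedes it below -/
import Mathlib

section
/- Let F : C → Ab be a reduced functor (F(0) = 0). Then for all objects X₁, …, Xₙ of C there is a natural decomposition F(X₁ ∨ … ∨ Xₙ) ≅ ⊕_{k=1}^{n} ⊕_{1 ≤ i₁ < … < i_k ≤ n} cr_kF(X_{i₁}, …, X_{i_k}). -/
open CategoryTheory Limits ZeroObject
open scoped TensorProduct

set_option linter.unusedSectionVars false

universe w v u

namespace QF

variable {C : Type u} [Category.{v} C] [HasZeroObject C] [HasZeroMorphisms C]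
  [HasBinaryCoproducts C]

noncomputable section

/-- The first canonical retraction `r₁ : X ∨ Y ⟶ X` (identity on `X`, zero on `Y`). -/
def r1 (X Y : C) : (X ⨿ Y) ⟶ X := coprod.desc (𝟙 X) 0

/-- The second canonical retraction `r₂ : X ∨ Y ⟶ Y` (zero on `X`, identity on `Y`). -/
def r2 (X Y : C) : (X ⨿ Y) ⟶ Y := coprod.desc 0 (𝟙 Y)

/-- The fold (codiagonal) map `∇² : X ∨ X ⟶ X`. -/
def fold (X : C) : (X ⨿ X) ⟶ X := coprod.desc (𝟙 X) (𝟙 X)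

/-- A functor `F : C ⥤ Ab` is *reduced* if `F(0) = 0`. -/
def Reduced (F : C ⥤ AddCommGrpCat.{w}) : Prop := Subsingleton (F.obj (0 : C))

/-- The second cross-effect `cr₂F(X,Y) = ker((F(r₁),F(r₂)) : F(X∨Y) → F(X) × F(Y))`,
as a subgroup of `F(X ∨ Y)`. -/
def cr2sub (F : C ⥤ AddCommGrpCat.{w}) (X Y : C) : AddSubgroup (F.obj (X ⨿ Y)) :=
  AddMonoidHom.ker (show (F.obj (X ⨿ Y) : Type w) →+ F.obj X from (F.map (r1 X Y)).hom) ⊓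
  AddMonoidHom.ker (show (F.obj (X ⨿ Y) : Type w) →+ F.obj Y from (F.map (r2 X Y)).hom)

lemma mem_cr2sub {F : C ⥤ AddCommGrpCat.{w}} {X Y : C} {z : F.obj (X ⨿ Y)} :
    z ∈ cr2sub F X Y ↔ F.map (r1 X Y) z = 0 ∧ F.map (r2 X Y) z = 0 := Iff.rfl

lemma fmap_comp_apply (F : C ⥤ AddCommGrpCat.{w}) {X Y Z : C} (f : X ⟶ Y) (g : Y ⟶ Z)
    (x : F.obj X) : F.map (f ≫ g) x = F.map g (F.map f x) := by rw [F.map_comp]; rfl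

lemma map_comp_r1 {X X' : C} (f : X ⟶ X') (Y : C) :
    coprod.map f (𝟙 Y) ≫ r1 X' Y = r1 X Y ≫ f := by
  apply coprod.hom_ext <;> simp [r1]

lemma map_comp_r2 {X X' : C} (f : X ⟶ X') (Y : C) :
    coprod.map f (𝟙 Y) ≫ r2 X' Y = r2 X Y := by
  apply coprod.hom_ext <;> simp [r2]

lemma map_comp_r1' (X : C) {Y Y' : C} (f : Y ⟶ Y') :
    coprod.map (𝟙 X) f ≫ r1 X Y' = r1 X Y := by
  apply coprod.hom_ext <;> simp [r1]

lemma map_comp_r2' (X : C) {Y Y' : C} (f : Y ⟶ Y') :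
    coprod.map (𝟙 X) f ≫ r2 X Y' = r2 X Y ≫ f := by
  apply coprod.hom_ext <;> simp [r2]

lemma cr2sub_map {F : C ⥤ AddCommGrpCat.{w}} {X X' Y : C} (f : X ⟶ X') {z : F.obj (X ⨿ Y)}
    (hz : z ∈ cr2sub F X Y) : F.map (coprod.map f (𝟙 Y)) z ∈ cr2sub F X' Y := by
  refine ⟨?_, ?_⟩
  · show F.map (r1 X' Y) (F.map (coprod.map f (𝟙 Y)) z) = 0
    rw [← fmap_comp_apply, map_comp_r1, fmap_comp_apply]
    rw [show F.map (r1 X Y) z = 0 from hz.1, map_zero]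
  · show F.map (r2 X' Y) (F.map (coprod.map f (𝟙 Y)) z) = 0
    rw [← fmap_comp_apply, map_comp_r2]
    exact hz.2

/-- The second cross-effect as a functor in the first variable: `X ↦ cr₂F(X,Y)`. -/
def cr2Fun (F : C ⥤ AddCommGrpCat.{w}) (Y : C) : C ⥤ AddCommGrpCat.{w} where
  obj X := AddCommGrpCat.of (cr2sub F X Y)
  map {X X'} f := AddCommGrpCat.ofHom <|
    AddMonoidHom.codRestrict
      ((show (F.obj (X ⨿ Y) : Type w) →+ F.obj (X' ⨿ Y) from (F.map (coprod.map f (𝟙 Y))).hom).comp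
        (cr2sub F X Y).subtype)
      (cr2sub F X' Y) (fun z => cr2sub_map f z.2)
  map_id X := by
    ext z
    show F.map (coprod.map (𝟙 X) (𝟙 Y)) z.1 = z.1
    rw [show coprod.map (𝟙 X) (𝟙 Y) = 𝟙 (X ⨿ Y) by apply coprod.hom_ext <;> simp]
    rw [F.map_id]; rfl
  map_comp {X X' X''} f g := by
    ext z
    show F.map (coprod.map (f ≫ g) (𝟙 Y)) z.1 =
      F.map (coprod.map g (𝟙 Y)) (F.map (coprod.map f (𝟙 Y)) z.1)
    rw [show coprod.map (f ≫ g) (𝟙 Y) = coprod.map f (𝟙 Y) ≫ coprod.map g (𝟙 Y) by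
      apply coprod.hom_ext <;> simp]
    rw [fmap_comp_apply]

lemma cr2sub_map' {F : C ⥤ AddCommGrpCat.{w}} {X Y Y' : C} (f : Y ⟶ Y') {z : F.obj (X ⨿ Y)}
    (hz : z ∈ cr2sub F X Y) : F.map (coprod.map (𝟙 X) f) z ∈ cr2sub F X Y' := by
  refine ⟨?_, ?_⟩
  · show F.map (r1 X Y') (F.map (coprod.map (𝟙 X) f) z) = 0
    rw [← fmap_comp_apply, map_comp_r1']
    exact hz.1
  · show F.map (r2 X Y') (F.map (coprod.map (𝟙 X) f) z) = 0
    rw [← fmap_comp_apply, map_comp_r2', fmap_comp_apply]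
    rw [show F.map (r2 X Y) z = 0 from hz.2, map_zero]

/-- The second cross-effect as a functor in the second variable: `Y ↦ cr₂F(X,Y)`. -/
def cr2FunR (F : C ⥤ AddCommGrpCat.{w}) (X : C) : C ⥤ AddCommGrpCat.{w} where
  obj Y := AddCommGrpCat.of (cr2sub F X Y)
  map {Y Y'} f := AddCommGrpCat.ofHom <|
    AddMonoidHom.codRestrict
      ((show (F.obj (X ⨿ Y) : Type w) →+ F.obj (X ⨿ Y') from (F.map (coprod.map (𝟙 X) f)).hom).comp
        (cr2sub F X Y).subtype)
      (cr2sub F X Y') (fun z => cr2sub_map' f z.2)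
  map_id Y := by
    ext z
    show F.map (coprod.map (𝟙 X) (𝟙 Y)) z.1 = z.1
    rw [show coprod.map (𝟙 X) (𝟙 Y) = 𝟙 (X ⨿ Y) by apply coprod.hom_ext <;> simp]
    rw [F.map_id]; rfl
  map_comp {Y Y' Y''} f g := by
    ext z
    show F.map (coprod.map (𝟙 X) (f ≫ g)) z.1 =
      F.map (coprod.map (𝟙 X) g) (F.map (coprod.map (𝟙 X) f) z.1)
    rw [show coprod.map (𝟙 X) (f ≫ g) = coprod.map (𝟙 X) f ≫ coprod.map (𝟙 X) g by
      apply coprod.hom_ext <;> simp]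
    rw [fmap_comp_apply]

/-- The first cross-effect `cr₁F(X) = ker(F(X) → F(0))` as a subgroup of `F(X)`. -/
def cr1sub (F : C ⥤ AddCommGrpCat.{w}) (X : C) : AddSubgroup (F.obj X) :=
  AddMonoidHom.ker (show (F.obj X : Type w) →+ F.obj (0 : C) from (F.map (0 : X ⟶ 0)).hom)

lemma cr1sub_map {F : C ⥤ AddCommGrpCat.{w}} {X X' : C} (f : X ⟶ X') {z : F.obj X}
    (hz : z ∈ cr1sub F X) : F.map f z ∈ cr1sub F X' := by
  show F.map (0 : X' ⟶ 0) (F.map f z) = 0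
  rw [← fmap_comp_apply, comp_zero]
  exact hz

/-- The first cross-effect as a functor `X ↦ cr₁F(X)`. -/
def cr1Fun (F : C ⥤ AddCommGrpCat.{w}) : C ⥤ AddCommGrpCat.{w} where
  obj X := AddCommGrpCat.of (cr1sub F X)
  map {X X'} f := AddCommGrpCat.ofHom <|
    AddMonoidHom.codRestrict
      ((show (F.obj X : Type w) →+ F.obj X' from (F.map f).hom).comp (cr1sub F X).subtype)
      (cr1sub F X') (fun z => cr1sub_map f z.2)
  map_id X := by
    ext z
    show F.map (𝟙 X) z.1 = z.1
    rw [F.map_id]; rfl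
  map_comp {X X' X''} f g := by
    ext z
    exact fmap_comp_apply F f g z.1

/-- `crHigher F n Ys` is `cr_{n+2}F` as a functor in the first variable, i.e.
`X ↦ cr_{n+2}F(X, Ys 0, ..., Ys n)`, defined inductively by
`cr_{n}F(X₁,…,Xₙ) = cr₂(cr_{n−1}F(−,X₃,…,Xₙ))(X₁,X₂)`. -/
def crHigher (F : C ⥤ AddCommGrpCat.{w}) : (n : ℕ) → (Fin (n + 1) → C) → (C ⥤ AddCommGrpCat.{w})
  | 0, Ys => cr2Fun F (Ys 0)
  | n+1, Ys => cr2Fun (crHigher F n (fun i => Ys i.succ)) (Ys 0)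

/-- `crGrp F k Xs` is the value `cr_{k+1}F(Xs 0, …, Xs k)` of the `(k+1)`-st
cross-effect of `F`. -/
def crGrp (F : C ⥤ AddCommGrpCat.{w}) : (k : ℕ) → (Fin (k + 1) → C) → AddCommGrpCat.{w}
  | 0, Xs => AddCommGrpCat.of (cr1sub F (Xs 0))
  | k+1, Xs => (crHigher F k (fun i => Xs i.succ)).obj (Xs 0)

/-- `F` is polynomial of degree `≤ n`, i.e. `cr_{n+1}F = 0`. -/
def IsPoly (F : C ⥤ AddCommGrpCat.{w}) (n : ℕ) : Prop :=
  ∀ Xs : Fin (n + 1) → C, Subsingleton (crGrp F n Xs)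

/-- The ambient iterated binary coproduct in which the `(n+2)`-nd cross-effect lives. -/
def nestH : (n : ℕ) → (Fin (n + 1) → C) → C → C
  | 0, Ys, X => X ⨿ Ys 0
  | n+1, Ys, X => nestH n (fun i => Ys i.succ) (X ⨿ Ys 0)

/-- The canonical inclusion of `cr_{n+2}F(X, Ys)` into `F` of the ambient coproduct. -/
def crIncl (F : C ⥤ AddCommGrpCat.{w}) : (n : ℕ) → (Ys : Fin (n + 1) → C) → (X : C) →
    (((crHigher F n Ys).obj X : Type w) →+ F.obj (nestH n Ys X))
  | 0, Ys, X => (cr2sub F X (Ys 0)).subtype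
  | n+1, Ys, X =>
    (crIncl F n (fun i => Ys i.succ) (X ⨿ Ys 0)).comp
      (cr2sub (crHigher F n (fun i => Ys i.succ)) X (Ys 0)).subtype

/-- The iterated fold map on the ambient coproduct, relative to a map `g : Z ⟶ X`. -/
def foldNest (X : C) : (n : ℕ) → (Z : C) → (Z ⟶ X) → ((nestH n (fun _ => X) Z) ⟶ X)
  | 0, _, g => coprod.desc g (𝟙 X)
  | n+1, Z, g => foldNest X n (Z ⨿ X) (coprod.desc g (𝟙 X))

/-- The image of `S_{n+2} : cr_{n+2}F(X,…,X) → F(X)` (inclusion followed by the fold map). -/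
def imS (F : C ⥤ AddCommGrpCat.{w}) (n : ℕ) (X : C) : AddSubgroup (F.obj X) :=
  AddMonoidHom.range
    ((show (F.obj (nestH n (fun _ => X) X) : Type w) →+ F.obj X from
        (F.map (foldNest X n X (𝟙 X))).hom).comp
      (crIncl F n (fun _ => X) X))

/-- The image of `S_{k+1} : cr_{k+1}F(X,…,X) → F(X)`. -/
def imSk (F : C ⥤ AddCommGrpCat.{w}) : (k : ℕ) → (X : C) → AddSubgroup (F.obj X)
  | 0, X => cr1sub F X
  | k+1, X => imS F k X

/-- The value `T_kF(X) = coker(S_{k+1} : cr_{k+1}F(X,…,X) → F(X))` of the `k`-th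
Taylorization of `F`. -/
def TObj (F : C ⥤ AddCommGrpCat.{w}) (k : ℕ) (X : C) : Type w :=
  (F.obj X : Type w) ⧸ imSk F k X

instance (F : C ⥤ AddCommGrpCat.{w}) (k : ℕ) (X : C) : AddCommGroup (TObj F k X) :=
  QuotientAddGroup.Quotient.addCommGroup _

/-- The second cross-effect of `F` as a bifunctor `C × C ⥤ Ab`. -/
def cr2Bif (F : C ⥤ AddCommGrpCat.{w}) : C × C ⥤ AddCommGrpCat.{w} where
  obj P := AddCommGrpCat.of (cr2sub F P.1 P.2)
  map {P Q} f := AddCommGrpCat.ofHom <|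
    AddMonoidHom.codRestrict
      ((show (F.obj (P.1 ⨿ P.2) : Type w) →+ F.obj (Q.1 ⨿ Q.2) from
          (F.map (coprod.map f.1 f.2)).hom).comp (cr2sub F P.1 P.2).subtype)
      (cr2sub F Q.1 Q.2) (fun z => by
        have h1 : F.map (coprod.map f.1 (𝟙 P.2)) z.1 ∈ cr2sub F Q.1 P.2 := cr2sub_map f.1 z.2
        have h2 := cr2sub_map' (X := Q.1) f.2 h1
        rw [← fmap_comp_apply] at h2
        rw [show coprod.map f.1 f.2 = coprod.map f.1 (𝟙 P.2) ≫ coprod.map (𝟙 Q.1) f.2 by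
          apply coprod.hom_ext <;> simp]
        exact h2)
  map_id P := by
    ext z
    show F.map (coprod.map (𝟙 P.1) (𝟙 P.2)) z.1 = z.1
    rw [show coprod.map (𝟙 P.1) (𝟙 P.2) = 𝟙 (P.1 ⨿ P.2) by apply coprod.hom_ext <;> simp]
    rw [F.map_id]; rfl
  map_comp {P Q R} f g := by
    ext z
    show F.map (coprod.map (f.1 ≫ g.1) (f.2 ≫ g.2)) z.1 =
      F.map (coprod.map g.1 g.2) (F.map (coprod.map f.1 f.2) z.1)
    rw [show coprod.map (f.1 ≫ g.1) (f.2 ≫ g.2) =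
      coprod.map f.1 f.2 ≫ coprod.map g.1 g.2 by apply coprod.hom_ext <;> simp]
    rw [fmap_comp_apply]

/-- For a bifunctor `B`, the second cross-effect in the first variable:
`cr₂(B(−,Y))(X,X) ⊆ B(X∨X, Y)`. -/
def crV1 (B : C × C ⥤ AddCommGrpCat.{w}) (X Y : C) : AddSubgroup (B.obj (X ⨿ X, Y)) :=
  AddMonoidHom.ker (show (B.obj (X ⨿ X, Y) : Type w) →+ B.obj (X, Y) from
    (B.map ((r1 X X, 𝟙 Y) : (X ⨿ X, Y) ⟶ (X, Y))).hom) ⊓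
  AddMonoidHom.ker (show (B.obj (X ⨿ X, Y) : Type w) →+ B.obj (X, Y) from
    (B.map ((r2 X X, 𝟙 Y) : (X ⨿ X, Y) ⟶ (X, Y))).hom)

/-- For a bifunctor `B`, the second cross-effect in the second variable:
`cr₂(B(X,−))(Y,Y) ⊆ B(X, Y∨Y)`. -/
def crV2 (B : C × C ⥤ AddCommGrpCat.{w}) (X Y : C) : AddSubgroup (B.obj (X, Y ⨿ Y)) :=
  AddMonoidHom.ker (show (B.obj (X, Y ⨿ Y) : Type w) →+ B.obj (X, Y) from
    (B.map ((𝟙 X, r1 Y Y) : (X, Y ⨿ Y) ⟶ (X, Y))).hom) ⊓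
  AddMonoidHom.ker (show (B.obj (X, Y ⨿ Y) : Type w) →+ B.obj (X, Y) from
    (B.map ((𝟙 X, r2 Y Y) : (X, Y ⨿ Y) ⟶ (X, Y))).hom)

/-- The image of `S₂` applied in the first variable of the bifunctor `B`. -/
def N1 (B : C × C ⥤ AddCommGrpCat.{w}) (X Y : C) : AddSubgroup (B.obj (X, Y)) :=
  (crV1 B X Y).map (show (B.obj (X ⨿ X, Y) : Type w) →+ B.obj (X, Y) from
    (B.map ((fold X, 𝟙 Y) : (X ⨿ X, Y) ⟶ (X, Y))).hom)

/-- The image of `S₂` applied in the second variable of the bifunctor `B`. -/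
def N2 (B : C × C ⥤ AddCommGrpCat.{w}) (X Y : C) : AddSubgroup (B.obj (X, Y)) :=
  (crV2 B X Y).map (show (B.obj (X, Y ⨿ Y) : Type w) →+ B.obj (X, Y) from
    (B.map ((𝟙 X, fold Y) : (X, Y ⨿ Y) ⟶ (X, Y))).hom)

/-- The value `T₁₁B(X,Y)` of the bilinearization of a bifunctor `B`: the quotient of
`B(X,Y)` by the images of the maps `S₂` applied in each variable separately. -/
def T11Obj (B : C × C ⥤ AddCommGrpCat.{w}) (X Y : C) : Type w :=
  (B.obj (X, Y) : Type w) ⧸ (N1 B X Y ⊔ N2 B X Y)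

instance (B : C × C ⥤ AddCommGrpCat.{w}) (X Y : C) : AddCommGroup (T11Obj B X Y) :=
  QuotientAddGroup.Quotient.addCommGroup _

/-- A bifunctor is bireduced if it vanishes whenever one variable is the zero object. -/
def Bireduced (B : C × C ⥤ AddCommGrpCat.{w}) : Prop :=
  ∀ X : C, Subsingleton (B.obj (X, (0 : C))) ∧ Subsingleton (B.obj ((0 : C), X))

/- ### Induced maps on cross-effects -/

/-- A natural transformation induces a map on second cross-effects (first variable form). -/
def cr2MapL {F G : C ⥤ AddCommGrpCat.{w}} (α : F ⟶ G) (Y : C) : cr2Fun F Y ⟶ cr2Fun G Y where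
  app X := AddCommGrpCat.ofHom <|
    AddMonoidHom.codRestrict
      ((show (F.obj (X ⨿ Y) : Type w) →+ G.obj (X ⨿ Y) from (α.app (X ⨿ Y)).hom).comp
        (cr2sub F X Y).subtype)
      (cr2sub G X Y) (fun z => by
        have natr1 := congrArg (fun (h : F.obj (X ⨿ Y) ⟶ G.obj X) => h z.1)
          (α.naturality (r1 X Y))
        have natr2 := congrArg (fun (h : F.obj (X ⨿ Y) ⟶ G.obj Y) => h z.1)
          (α.naturality (r2 X Y))
        constructor
        · show G.map (r1 X Y) (α.app (X ⨿ Y) z.1) = 0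
          have : α.app X (F.map (r1 X Y) z.1) = G.map (r1 X Y) (α.app (X ⨿ Y) z.1) := natr1
          rw [← this, show F.map (r1 X Y) z.1 = 0 from z.2.1, map_zero]
        · show G.map (r2 X Y) (α.app (X ⨿ Y) z.1) = 0
          have : α.app Y (F.map (r2 X Y) z.1) = G.map (r2 X Y) (α.app (X ⨿ Y) z.1) := natr2
          rw [← this, show F.map (r2 X Y) z.1 = 0 from z.2.2, map_zero])
  naturality {X X'} f := by
    ext z
    apply Subtype.ext
    show α.app (X' ⨿ Y) (F.map (coprod.map f (𝟙 Y)) z.1) =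
      G.map (coprod.map f (𝟙 Y)) (α.app (X ⨿ Y) z.1)
    exact congrArg (fun (h : F.obj (X ⨿ Y) ⟶ G.obj (X' ⨿ Y)) => h z.1)
      (α.naturality (coprod.map f (𝟙 Y)))

/-- A natural transformation induces a map on first cross-effects. -/
def cr1Map {F G : C ⥤ AddCommGrpCat.{w}} (α : F ⟶ G) : cr1Fun F ⟶ cr1Fun G where
  app X := AddCommGrpCat.ofHom <|
    AddMonoidHom.codRestrict
      ((show (F.obj X : Type w) →+ G.obj X from (α.app X).hom).comp (cr1sub F X).subtype)
      (cr1sub G X) (fun z => by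
        show G.map (0 : X ⟶ 0) (α.app X z.1) = 0
        have : α.app (0 : C) (F.map (0 : X ⟶ 0) z.1) = G.map (0 : X ⟶ 0) (α.app X z.1) :=
          congrArg (fun (h : F.obj X ⟶ G.obj (0 : C)) => h z.1) (α.naturality (0 : X ⟶ 0))
        rw [← this, show F.map (0 : X ⟶ 0) z.1 = 0 from z.2, map_zero])
  naturality {X X'} f := by
    ext z
    apply Subtype.ext
    show α.app X' (F.map f z.1) = G.map f (α.app X z.1)
    exact congrArg (fun (h : F.obj X ⟶ G.obj X') => h z.1) (α.naturality f)

/-- A natural transformation induces maps on all higher cross-effects. -/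
def crHigherMap {F G : C ⥤ AddCommGrpCat.{w}} (α : F ⟶ G) :
    (n : ℕ) → (Ys : Fin (n + 1) → C) → (crHigher F n Ys ⟶ crHigher G n Ys)
  | 0, Ys => cr2MapL α (Ys 0)
  | n+1, Ys => cr2MapL (crHigherMap α n (fun i => Ys i.succ)) (Ys 0)

/-- The map induced by a natural transformation on the value of the `(k+1)`-st cross-effect. -/
def crGrpMap {F G : C ⥤ AddCommGrpCat.{w}} (α : F ⟶ G) :
    (k : ℕ) → (Xs : Fin (k + 1) → C) → (crGrp F k Xs ⟶ crGrp G k Xs)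
  | 0, Xs => (cr1Map α).app (Xs 0)
  | k+1, Xs => (crHigherMap α k (fun i => Xs i.succ)).app (Xs 0)

/- ### The reduced standard projective functor `U_X` -/

/-- The subgroup of `ℤ[C(X,Z)]` spanned by the zero morphism. -/
def USub (X Z : C) : AddSubgroup ((X ⟶ Z) →₀ ℤ) :=
  AddSubgroup.closure {Finsupp.single (0 : X ⟶ Z) 1}

/-- The value `U_X(Z) = ℤ[C(X,Z)]/ℤ[0]` of the reduced standard projective functor. -/
def UObj (X Z : C) : Type v := ((X ⟶ Z) →₀ ℤ) ⧸ USub X Z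

instance (X Z : C) : AddCommGroup (UObj X Z) := QuotientAddGroup.Quotient.addCommGroup _

lemma USub_le_comap (X : C) {Z Z' : C} (g : Z ⟶ Z') :
    USub X Z ≤ AddSubgroup.comap
      (Finsupp.mapDomain.addMonoidHom (fun φ : X ⟶ Z => φ ≫ g)) (USub X Z') := by
  rw [USub, AddSubgroup.closure_le]
  rintro x rfl
  show Finsupp.mapDomain.addMonoidHom (fun φ : X ⟶ Z => φ ≫ g)
      (Finsupp.single (0 : X ⟶ Z) 1) ∈ USub X Z'
  rw [Finsupp.mapDomain.addMonoidHom_apply, Finsupp.mapDomain_single, zero_comp]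
  exact AddSubgroup.subset_closure rfl

/-- The reduced standard projective functor `U_X : C ⥤ Ab` associated with `X`,
the quotient of `Z ↦ ℤ[C(X,Z)]` by the subfunctor spanned by the zero morphisms. -/
def UFun (X : C) : C ⥤ AddCommGrpCat.{v} where
  obj Z := AddCommGrpCat.of (UObj X Z)
  map {Z Z'} g := AddCommGrpCat.ofHom <|
    QuotientAddGroup.map (USub X Z) (USub X Z')
      (Finsupp.mapDomain.addMonoidHom (fun φ : X ⟶ Z => φ ≫ g)) (USub_le_comap X g)
  map_id Z := by
    ext x
    refine QuotientAddGroup.induction_on x (fun z => ?_)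
    change QuotientAddGroup.map (USub X Z) (USub X Z) _ (USub_le_comap X (𝟙 Z))
      (QuotientAddGroup.mk z) = QuotientAddGroup.mk z
    rw [QuotientAddGroup.map_mk]
    congr 1
    simp only [Finsupp.mapDomain.addMonoidHom_apply, Category.comp_id]
    exact Finsupp.mapDomain_id
  map_comp {Z Z' Z''} g h := by
    ext x
    refine QuotientAddGroup.induction_on x (fun z => ?_)
    change QuotientAddGroup.map (USub X Z) (USub X Z'') _ (USub_le_comap X (g ≫ h))
      (QuotientAddGroup.mk z) =
      QuotientAddGroup.map (USub X Z') (USub X Z'') _ (USub_le_comap X h)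
      (QuotientAddGroup.map (USub X Z) (USub X Z') _ (USub_le_comap X g)
        (QuotientAddGroup.mk z))
    rw [QuotientAddGroup.map_mk, QuotientAddGroup.map_mk, QuotientAddGroup.map_mk]
    congr 1
    simp only [Finsupp.mapDomain.addMonoidHom_apply, ← Finsupp.mapDomain_comp]
    congr 1
    funext φ
    simp

/-- The class of a morphism `φ : X ⟶ Z` in `U_X(Z)`. -/
def uOf {X Z : C} (φ : X ⟶ Z) : UObj X Z := QuotientAddGroup.mk (Finsupp.single φ (1 : ℤ))

/-- The iterated sum `E^{∨k}` of copies of `E` (with `E^{∨0} = 0`). -/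
def pow (E : C) : ℕ → C
  | 0 => 0
  | n+1 => pow E n ⨿ E

/-- The summand `cr_{|S|}F(X_{i₁},…,X_{i_k})` attached to a nonempty subset `S ⊆ Fin n`. -/
def piece (F : C ⥤ AddCommGrpCat.{w}) {n : ℕ} (X : Fin n → C)
    (S : {S : Finset (Fin n) // S.Nonempty}) : AddCommGrpCat.{w} :=
  crGrp F (S.1.card - 1) fun i =>
    X (S.1.orderIsoOfFin rfl
        (Fin.cast (Nat.succ_pred_eq_of_pos (Finset.card_pos.mpr S.2)) i))

/- ### Auxiliary lemmas for the decomposition theorem -/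

/-- Transport along an equality of objects of `AddCommGrp`. -/
def addEquivOfEq {A B : AddCommGrpCat.{w}} (h : A = B) : (A : Type w) ≃+ (B : Type w) := by
  subst h; exact AddEquiv.refl _

/-- `F` maps isomorphic objects to isomorphic groups. -/
def mapAddEquiv (F : C ⥤ AddCommGrpCat.{w}) {A B : C} (e : A ≅ B) :
    (F.obj A : Type w) ≃+ (F.obj B : Type w) where
  toFun := F.map e.hom
  invFun := F.map e.inv
  left_inv x := by rw [← fmap_comp_apply, e.hom_inv_id, F.map_id]; rfl
  right_inv x := by rw [← fmap_comp_apply, e.inv_hom_id, F.map_id]; rfl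
  map_add' := map_add _

lemma reduced_map_zero {F : C ⥤ AddCommGrpCat.{w}} (hF : Reduced F) {A B : C} (x : F.obj A) :
    F.map (0 : A ⟶ B) x = 0 := by
  have h : (0 : A ⟶ B) = (0 : A ⟶ (0 : C)) ≫ (0 : (0 : C) ⟶ B) := (zero_comp).symm
  rw [h, fmap_comp_apply]
  haveI : Subsingleton (F.obj (0 : C)) := hF
  have h2 : F.map (0 : A ⟶ (0 : C)) x = 0 := Subsingleton.elim _ _
  rw [h2, map_zero]

/-- The kernel of a homomorphism into a subsingleton group is everything. -/
def kerEquivOfSubsingleton {M N : Type w} [AddCommGroup M] [AddCommGroup N] [Subsingleton N]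
    (f : M →+ N) : (AddMonoidHom.ker f : AddSubgroup M) ≃+ M where
  toFun := Subtype.val
  invFun m := ⟨m, Subsingleton.elim _ _⟩
  left_inv x := Subtype.ext rfl
  right_inv m := rfl
  map_add' _ _ := rfl

/-- For reduced `F`, the first cross-effect is all of `F(X)`. -/
def crGrpZeroEquiv (F : C ⥤ AddCommGrpCat.{w}) (hF : Reduced F) (Xs : Fin 1 → C) :
    (crGrp F 0 Xs : Type w) ≃+ (F.obj (Xs 0) : Type w) :=
  haveI : Subsingleton (F.obj (0 : C)) := hF
  kerEquivOfSubsingleton _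

/-- The binary decomposition `F(A ∨ B) ≅ F(A) ⊕ F(B) ⊕ cr₂F(A,B)` for reduced `F`. -/
def binSplit (F : C ⥤ AddCommGrpCat.{w}) (hF : Reduced F) (A B : C) :
    (F.obj (A ⨿ B) : Type w) ≃+
      ((F.obj A : Type w)) × ((F.obj B : Type w)) × ((cr2sub F A B : Type w)) := by
  have hir1 : (coprod.inl : A ⟶ A ⨿ B) ≫ r1 A B = 𝟙 A := by simp [r1, coprod.inl_desc, coprod.inr_desc]
  have hir2 : (coprod.inr : B ⟶ A ⨿ B) ≫ r1 A B = 0 := by simp [r1, coprod.inl_desc, coprod.inr_desc]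
  have hir3 : (coprod.inl : A ⟶ A ⨿ B) ≫ r2 A B = 0 := by simp [r2, coprod.inl_desc, coprod.inr_desc]
  have hir4 : (coprod.inr : B ⟶ A ⨿ B) ≫ r2 A B = 𝟙 B := by simp [r2, coprod.inl_desc, coprod.inr_desc]
  have c1 : ∀ x : F.obj A, F.map (r1 A B) (F.map coprod.inl x) = x := fun x => by
    rw [← fmap_comp_apply, hir1, F.map_id]; rfl
  have c2 : ∀ x : F.obj B, F.map (r1 A B) (F.map coprod.inr x) = 0 := fun x => by
    rw [← fmap_comp_apply, hir2]; exact reduced_map_zero hF x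
  have c3 : ∀ x : F.obj A, F.map (r2 A B) (F.map coprod.inl x) = 0 := fun x => by
    rw [← fmap_comp_apply, hir3]; exact reduced_map_zero hF x
  have c4 : ∀ x : F.obj B, F.map (r2 A B) (F.map coprod.inr x) = x := fun x => by
    rw [← fmap_comp_apply, hir4, F.map_id]; rfl
  refine
  { toFun := fun z => (F.map (r1 A B) z, F.map (r2 A B) z,
      ⟨z - F.map coprod.inl (F.map (r1 A B) z) - F.map coprod.inr (F.map (r2 A B) z), ?_, ?_⟩)
    invFun := fun p => F.map coprod.inl p.1 + F.map coprod.inr p.2.1 + (p.2.2 : F.obj (A ⨿ B))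
    left_inv := fun z => ?_
    right_inv := fun p => ?_
    map_add' := fun z w => ?_ }
  · show F.map (r1 A B) _ = 0
    rw [map_sub, map_sub, c1, c2]
    abel
  · show F.map (r2 A B) _ = 0
    rw [map_sub, map_sub, c3, c4]
    abel
  · show F.map coprod.inl (F.map (r1 A B) z) + F.map coprod.inr (F.map (r2 A B) z) +
      (z - F.map coprod.inl (F.map (r1 A B) z) - F.map coprod.inr (F.map (r2 A B) z)) = z
    abel
  · obtain ⟨a, b, c⟩ := p
    have h1 : F.map (r1 A B) (F.map coprod.inl a + F.map coprod.inr b + (c : F.obj (A ⨿ B)))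
        = a := by
      rw [map_add, map_add, c1, c2, show F.map (r1 A B) (c : F.obj (A ⨿ B)) = 0 from c.2.1]
      abel
    have h2 : F.map (r2 A B) (F.map coprod.inl a + F.map coprod.inr b + (c : F.obj (A ⨿ B)))
        = b := by
      rw [map_add, map_add, c3, c4, show F.map (r2 A B) (c : F.obj (A ⨿ B)) = 0 from c.2.2]
      abel
    refine Prod.ext h1 (Prod.ext h2 (Subtype.ext ?_))
    show F.map coprod.inl a + F.map coprod.inr b + (c : F.obj (A ⨿ B)) -
        F.map coprod.inl (F.map (r1 A B) _) - F.map coprod.inr (F.map (r2 A B) _)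
      = (c : F.obj (A ⨿ B))
    rw [h1, h2]
    abel
  · refine Prod.ext (map_add _ _ _) (Prod.ext (map_add _ _ _) (Subtype.ext ?_))
    show (z + w) - F.map coprod.inl (F.map (r1 A B) (z + w)) -
        F.map coprod.inr (F.map (r2 A B) (z + w))
      = (z - F.map coprod.inl (F.map (r1 A B) z) - F.map coprod.inr (F.map (r2 A B) z))
      + (w - F.map coprod.inl (F.map (r1 A B) w) - F.map coprod.inr (F.map (r2 A B) w))
    rw [map_add, map_add, map_add, map_add]
    abel

lemma cr2Fun_reduced (F : C ⥤ AddCommGrpCat.{w}) (Z : C) : Reduced (cr2Fun F Z) := by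
  have key : ∀ c : cr2sub F (0 : C) Z, (c : F.obj ((0 : C) ⨿ Z)) = 0 := by
    intro c
    have h1 : (r2 (0 : C) Z) ≫ (coprod.inr : Z ⟶ (0 : C) ⨿ Z) = 𝟙 _ := by
      apply coprod.hom_ext
      · exact (isZero_zero C).eq_of_src _ _
      · simp [r2, coprod.inr_desc]
    have h2 := congrArg
      (fun (f : ((0:C) ⨿ Z) ⟶ ((0:C) ⨿ Z)) => F.map f (c : F.obj ((0:C) ⨿ Z))) h1
    simp only [fmap_comp_apply, F.map_id] at h2
    rw [show F.map (r2 (0 : C) Z) (c : F.obj ((0:C) ⨿ Z)) = 0 from c.2.2, map_zero] at h2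
    exact h2.symm.trans (by rfl)
  constructor
  intro a b
  exact Subtype.ext ((key a).trans (key b).symm)

lemma crHigher_peel (F : C ⥤ AddCommGrpCat.{w}) : ∀ (m : ℕ) (Ys : Fin (m + 2) → C),
    crHigher F (m + 1) Ys
      = crHigher (cr2Fun F (Ys (Fin.last (m + 1)))) m (fun i => Ys i.castSucc)
  | 0, Ys => by
    show cr2Fun (cr2Fun F (Ys ((0 : Fin 1).succ))) (Ys 0)
       = cr2Fun (cr2Fun F (Ys (Fin.last 1))) (Ys ((0 : Fin 1).castSucc))
    have h1 : (0 : Fin 1).succ = Fin.last 1 := by decide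
    have h2 : (0 : Fin 1).castSucc = (0 : Fin 2) := by decide
    rw [h1, h2]
  | m + 1, Ys => by
    show cr2Fun (crHigher F (m + 1) (fun i => Ys i.succ)) (Ys 0)
       = cr2Fun (crHigher (cr2Fun F (Ys (Fin.last (m + 2)))) m
            (fun i => Ys (i.succ).castSucc)) (Ys ((0 : Fin (m + 2)).castSucc))
    rw [crHigher_peel F m (fun i => Ys i.succ)]
    have h1 : ((Fin.last (m + 1)).succ : Fin (m + 3)) = Fin.last (m + 2) := Fin.succ_last _
    have h2 : (fun i : Fin (m + 1) => Ys (i.castSucc).succ)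
        = (fun i : Fin (m + 1) => Ys (i.succ).castSucc) := by
      funext i; rw [Fin.succ_castSucc]
    have h3 : (Ys ((0 : Fin (m + 2)).castSucc)) = Ys 0 := by rw [Fin.castSucc_zero]
    rw [h3]
    show cr2Fun (crHigher (cr2Fun F (Ys ((Fin.last (m+1)).succ))) m
        (fun i => Ys (i.castSucc).succ)) (Ys 0) = _
    rw [h1, h2]

lemma crGrp_congr (F : C ⥤ AddCommGrpCat.{w}) {k k' : ℕ} (h : k = k') {Xs : Fin (k + 1) → C}
    {Xs' : Fin (k' + 1) → C} (hX : ∀ i : Fin (k + 1), Xs i = Xs' ⟨i.val, by omega⟩) :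
    crGrp F k Xs = crGrp F k' Xs' := by
  subst h
  have hfun : Xs = Xs' := funext fun i => (hX i).trans (congrArg Xs' (Fin.ext rfl))
  rw [hfun]

lemma crGrp_bridge (F : C ⥤ AddCommGrpCat.{w}) (Z : C) (k : ℕ) (Ys : Fin (k + 1) → C)
    (Xs : Fin (k + 2) → C) (h0 : ∀ i : Fin (k + 1), Xs i.castSucc = Ys i)
    (hl : Xs (Fin.last (k + 1)) = Z) :
    Nonempty ((crGrp (cr2Fun F Z) k Ys : Type w) ≃+ (crGrp F (k + 1) Xs : Type w)) := by
  match k, Ys, Xs, h0, hl with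
  | 0, Ys, Xs, h0, hl =>
    haveI : Subsingleton ((cr2Fun F Z).obj (0 : C)) := cr2Fun_reduced F Z
    refine ⟨AddEquiv.trans (kerEquivOfSubsingleton
      (show ((cr2Fun F Z).obj (Ys 0) : Type w) →+ (cr2Fun F Z).obj (0 : C) from
        ((cr2Fun F Z).map (0 : Ys 0 ⟶ 0)).hom)) (addEquivOfEq ?_)⟩
    show (cr2Fun F Z).obj (Ys 0) = (cr2Fun F (Xs ((0 : Fin 1).succ))).obj (Xs 0)
    have e1 : Xs ((0 : Fin 1).succ) = Z := by
      rw [show ((0 : Fin 1).succ) = Fin.last 1 by decide]; exact hl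
    have e2 : Xs 0 = Ys 0 := by
      rw [show (0 : Fin 2) = Fin.castSucc (0 : Fin 1) by decide]; exact h0 0
    rw [e1, e2]
  | k + 1, Ys, Xs, h0, hl =>
    refine ⟨addEquivOfEq ?_⟩
    show (crHigher (cr2Fun F Z) k (fun i => Ys i.succ)).obj (Ys 0)
      = (crHigher F (k + 1) (fun i => Xs i.succ)).obj (Xs 0)
    rw [crHigher_peel F k (fun i => Xs i.succ)]
    have e1 : Xs ((Fin.last (k + 1)).succ) = Z := by rw [Fin.succ_last]; exact hl
    have e2 : (fun i : Fin (k + 1) => Xs ((i.castSucc).succ)) = fun i => Ys i.succ := by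
      funext i
      rw [Fin.succ_castSucc]
      exact h0 i.succ
    have e3 : Xs 0 = Ys 0 := by
      rw [show (0 : Fin (k + 3)) = Fin.castSucc (0 : Fin (k + 2)) from
        (Fin.castSucc_zero).symm]
      exact h0 0
    show (crHigher (cr2Fun F Z) k (fun i => Ys i.succ)).obj (Ys 0)
      = (crHigher (cr2Fun F (Xs ((Fin.last (k + 1)).succ))) k
          (fun i => Xs ((i.castSucc).succ))).obj (Xs 0)
    rw [e1, e2, e3]

/-- Splitting a direct sum over a sum type. -/
def sumSplit {ι : Type} {κ : Type} [DecidableEq ι] [DecidableEq κ]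
    (M : ι ⊕ κ → Type w) [∀ x, AddCommGroup (M x)] :
    (DirectSum (ι ⊕ κ) M) ≃+
      ((DirectSum ι (fun i => M (Sum.inl i))) × (DirectSum κ (fun j => M (Sum.inr j)))) := by
  classical
  let to1 : DirectSum (ι ⊕ κ) M →+
      (DirectSum ι (fun i => M (Sum.inl i))) × (DirectSum κ (fun j => M (Sum.inr j))) :=
    DirectSum.toAddMonoid (fun x => Sum.rec
      (fun i => (AddMonoidHom.inl _ _).comp (DirectSum.of (fun i => M (Sum.inl i)) i))
      (fun j => (AddMonoidHom.inr _ _).comp (DirectSum.of (fun j => M (Sum.inr j)) j)) x)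
  let frL : DirectSum ι (fun i => M (Sum.inl i)) →+ DirectSum (ι ⊕ κ) M :=
    DirectSum.toAddMonoid fun i => DirectSum.of M (Sum.inl i)
  let frR : DirectSum κ (fun j => M (Sum.inr j)) →+ DirectSum (ι ⊕ κ) M :=
    DirectSum.toAddMonoid fun j => DirectSum.of M (Sum.inr j)
  let fr := AddMonoidHom.coprod frL frR
  have key0 : fr.comp to1 = AddMonoidHom.id _ := by
    apply DirectSum.addHom_ext
    intro x y
    cases x with
    | inl i =>
      simp [to1, fr, frL, frR, DirectSum.toAddMonoid_of]
    | inr j =>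
      simp [to1, fr, frL, frR, DirectSum.toAddMonoid_of]
  have key1 : to1.comp frL = AddMonoidHom.inl _ _ := by
    apply DirectSum.addHom_ext
    intro i y
    simp [to1, frL, DirectSum.toAddMonoid_of]
  have key2 : to1.comp frR = AddMonoidHom.inr _ _ := by
    apply DirectSum.addHom_ext
    intro j y
    simp [to1, frR, DirectSum.toAddMonoid_of]
  refine
  { toFun := to1
    invFun := fr
    left_inv := fun z => DFunLike.congr_fun key0 z
    right_inv := fun p => ?_
    map_add' := map_add to1 }
  obtain ⟨a, b⟩ := p
  have : to1 (fr (a, b)) = to1 (frL a) + to1 (frR b) := by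
    show to1 (frL a + frR b) = _
    rw [map_add]
  rw [this, show to1 (frL a) = (a, 0) from DFunLike.congr_fun key1 a,
    show to1 (frR b) = (0, b) from DFunLike.congr_fun key2 b]
  ext <;> simp

lemma last_not_mem_map {n : ℕ} (T : Finset (Fin n)) :
    Fin.last n ∉ T.map Fin.castSuccEmb := by
  intro h
  rw [Finset.mem_map] at h
  obtain ⟨x, _, hcast⟩ := h
  exact (Fin.castSucc_lt_last x).ne hcast

lemma orderEmbOfFin_map {n : ℕ} (T : Finset (Fin n)) {k : ℕ} (h : T.card = k)
    (h' : (T.map Fin.castSuccEmb).card = k) (i : Fin k) :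
    (T.map Fin.castSuccEmb).orderEmbOfFin h' i = Fin.castSucc (T.orderEmbOfFin h i) := by
  refine (congrFun (Finset.orderEmbOfFin_unique h'
    (f := fun i => Fin.castSucc (T.orderEmbOfFin h i)) (fun x => ?_) ?_) i).symm
  · exact Finset.mem_map_of_mem _ (Finset.orderEmbOfFin_mem T h x)
  · intro a b hab
    exact Fin.castSucc_lt_castSucc_iff.mpr ((T.orderEmbOfFin h).strictMono hab)

lemma orderEmbOfFin_insert {n : ℕ} (T : Finset (Fin n)) {k : ℕ} (h : T.card = k)
    (h' : (insert (Fin.last n) (T.map Fin.castSuccEmb)).card = k + 1) (i : Fin (k + 1)) :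
    (insert (Fin.last n) (T.map Fin.castSuccEmb)).orderEmbOfFin h' i
      = (Fin.snoc (fun j : Fin k => Fin.castSucc (T.orderEmbOfFin h j)) (Fin.last n) :
          Fin (k + 1) → Fin (n + 1)) i := by
  refine (congrFun (Finset.orderEmbOfFin_unique h'
    (f := (Fin.snoc (fun j : Fin k => Fin.castSucc (T.orderEmbOfFin h j)) (Fin.last n) :
          Fin (k + 1) → Fin (n + 1)))
    (fun x => ?_) ?_) i).symm
  · induction x using Fin.lastCases with
    | last =>
      rw [Fin.snoc_last]
      exact Finset.mem_insert_self _ _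
    | cast j =>
      rw [Fin.snoc_castSucc]
      exact Finset.mem_insert_of_mem
        (Finset.mem_map_of_mem _ (Finset.orderEmbOfFin_mem T h j))
  · intro a b hab
    induction b using Fin.lastCases with
    | last =>
      rcases Fin.eq_castSucc_or_eq_last a with ⟨j, rfl⟩ | rfl
      · rw [Fin.snoc_last, Fin.snoc_castSucc]
        exact Fin.castSucc_lt_last _
      · exact absurd hab (lt_irrefl _)
    | cast j =>
      rcases Fin.eq_castSucc_or_eq_last a with ⟨j', rfl⟩ | rfl
      · rw [Fin.snoc_castSucc, Fin.snoc_castSucc]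
        exact Fin.castSucc_lt_castSucc_iff.mpr
          ((T.orderEmbOfFin h).strictMono (Fin.castSucc_lt_castSucc_iff.mp hab))
      · exact absurd (hab.trans (Fin.castSucc_lt_last j)) (lt_irrefl _)

lemma piece_eq_crGrp (F : C ⥤ AddCommGrpCat.{w}) {n : ℕ} (X : Fin n → C)
    (S : {S : Finset (Fin n) // S.Nonempty}) {k : ℕ} (hk : S.1.card = k + 1)
    {Ys : Fin (k + 1) → C}
    (hY : ∀ i : Fin (k + 1), Ys i = X (S.1.orderEmbOfFin hk i)) :
    piece F X S = crGrp F k Ys := by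
  refine (crGrp_congr F (k := k) (k' := S.1.card - 1) (by omega) (fun i => ?_)).symm
  rw [hY]
  congr 1

/-- Componentwise equivalence of direct sums. -/
def dsCongr {ι : Type} {β γ : ι → Type w} [∀ i, AddCommGroup (β i)]
    [∀ i, AddCommGroup (γ i)] (h : ∀ i, β i ≃+ γ i) : DirectSum ι β ≃+ DirectSum ι γ :=
  DFinsupp.mapRange.addEquiv h

/- ### The index combinatorics -/

/-- The preimage under `castSucc` of a subset of `Fin (n+1)`. -/
def pre {n : ℕ} (S : Finset (Fin (n + 1))) : Finset (Fin n) :=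
  Finset.univ.filter (fun j : Fin n => j.castSucc ∈ S)

lemma mem_pre {n : ℕ} {S : Finset (Fin (n + 1))} {j : Fin n} :
    j ∈ pre S ↔ j.castSucc ∈ S := by simp [pre]

lemma pre_map {n : ℕ} (T : Finset (Fin n)) : pre (T.map Fin.castSuccEmb) = T := by
  ext j
  rw [mem_pre]
  exact Finset.mem_map' _

lemma pre_insert {n : ℕ} (T : Finset (Fin n)) :
    pre (insert (Fin.last n) (T.map Fin.castSuccEmb)) = T := by
  ext j
  rw [mem_pre, Finset.mem_insert]
  constructor
  · rintro (h | h)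
    · exact absurd h (Fin.castSucc_lt_last j).ne
    · exact (Finset.mem_map' _).mp h
  · intro hj
    exact Or.inr ((Finset.mem_map' _).mpr hj)

lemma pre_singleton {n : ℕ} : pre ({Fin.last n} : Finset (Fin (n + 1))) = ∅ := by
  ext j
  rw [mem_pre, Finset.mem_singleton]
  simp only [Finset.notMem_empty, iff_false]
  exact (Fin.castSucc_lt_last j).ne

lemma map_pre_of_not_mem {n : ℕ} {S : Finset (Fin (n + 1))} (h : Fin.last n ∉ S) :
    (pre S).map Fin.castSuccEmb = S := by
  ext x
  induction x using Fin.lastCases with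
  | last =>
    constructor
    · intro hx; exact absurd hx (last_not_mem_map _)
    · intro hx; exact absurd hx h
  | cast j =>
    exact ⟨fun hx => mem_pre.mp ((Finset.mem_map' _).mp hx),
      fun hx => (Finset.mem_map' _).mpr (mem_pre.mpr hx)⟩

lemma insert_pre_of_mem {n : ℕ} {S : Finset (Fin (n + 1))} (h : Fin.last n ∈ S) :
    insert (Fin.last n) ((pre S).map Fin.castSuccEmb) = S := by
  ext x
  rw [Finset.mem_insert]
  induction x using Fin.lastCases with
  | last => simp [h]
  | cast j =>
    constructor
    · rintro (hj | hj)
      · exact absurd hj (Fin.castSucc_lt_last j).ne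
      · exact mem_pre.mp ((Finset.mem_map' _).mp hj)
    · intro hj
      exact Or.inr ((Finset.mem_map' _).mpr (mem_pre.mpr hj))

lemma pre_nonempty {n : ℕ} {S : Finset (Fin (n + 1))} (hS : S.Nonempty)
    (hl : Fin.last n ∉ S) : (pre S).Nonempty := by
  obtain ⟨x, hx⟩ := hS
  rcases Fin.eq_castSucc_or_eq_last x with ⟨j, rfl⟩ | rfl
  · exact ⟨j, mem_pre.mpr hx⟩
  · exact absurd hx hl

/-- The equivalence between nonempty subsets of `Fin (n+1)` and the disjoint union of:
nonempty subsets avoiding `last`, the singleton `{last}`, and nonempty subsets together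
with `last`. -/
def idxEquiv (n : ℕ) :
    ({T : Finset (Fin n) // T.Nonempty} ⊕ (PUnit.{1} ⊕ {T : Finset (Fin n) // T.Nonempty}))
      ≃ {S : Finset (Fin (n + 1)) // S.Nonempty} where
  toFun x := match x with
    | .inl T => ⟨T.1.map Fin.castSuccEmb, T.2.map⟩
    | .inr (.inl _) => ⟨{Fin.last n}, Finset.singleton_nonempty _⟩
    | .inr (.inr T) => ⟨insert (Fin.last n) (T.1.map Fin.castSuccEmb),
        Finset.insert_nonempty _ _⟩
  invFun S :=
    if hl : Fin.last n ∈ S.1 then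
      (if h2 : (pre S.1).Nonempty then .inr (.inr ⟨pre S.1, h2⟩)
       else .inr (.inl PUnit.unit))
    else .inl ⟨pre S.1, pre_nonempty S.2 hl⟩
  left_inv x := by
    rcases x with T | u | T
    · dsimp only
      rw [dif_neg (last_not_mem_map T.1)]
      exact congrArg Sum.inl (Subtype.ext (pre_map T.1))
    · dsimp only
      rw [dif_pos (Finset.mem_singleton_self _)]
      have h2 : ¬ (pre ({Fin.last n} : Finset (Fin (n + 1)))).Nonempty := by
        rw [pre_singleton]
        exact Finset.not_nonempty_empty
      rw [dif_neg h2]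
    · dsimp only
      rw [dif_pos (Finset.mem_insert_self _ _)]
      have h2 : (pre (insert (Fin.last n) (T.1.map Fin.castSuccEmb))).Nonempty := by
        rw [pre_insert]
        exact T.2
      rw [dif_pos h2]
      congr 2
      exact Subtype.ext (pre_insert T.1)
  right_inv S := by
    dsimp only
    by_cases hl : Fin.last n ∈ S.1
    · by_cases h2 : (pre S.1).Nonempty
      · rw [dif_pos hl, dif_pos h2]
        exact Subtype.ext (insert_pre_of_mem hl)
      · rw [dif_pos hl, dif_neg h2]
        refine Subtype.ext ?_
        have hpre : pre S.1 = ∅ := Finset.not_nonempty_iff_eq_empty.mp h2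
        have := insert_pre_of_mem hl
        rw [hpre, Finset.map_empty] at this
        simpa using this
    · rw [dif_neg hl]
      exact Subtype.ext (map_pre_of_not_mem hl)

/- ### The categorical splitting of the coproduct -/

/-- The iso `∐_{i : Fin (n+1)} X i ≅ (∐_{i : Fin n} X i.castSucc) ⨿ X (last n)`. -/
def splitIso [HasFiniteCoproducts C] {n : ℕ} (X : Fin (n + 1) → C) :
    (∐ X) ≅ ((∐ fun i : Fin n => X i.castSucc) ⨿ X (Fin.last n)) where
  hom := Sigma.desc (fun i =>
    @Fin.lastCases n (fun i => X i ⟶ ((∐ fun i : Fin n => X i.castSucc) ⨿ X (Fin.last n)))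
      coprod.inr
      (fun j => Sigma.ι (fun i : Fin n => X i.castSucc) j ≫ coprod.inl) i)
  inv := coprod.desc (Sigma.desc fun j => Sigma.ι X j.castSucc) (Sigma.ι X (Fin.last n))
  hom_inv_id := by
    apply Sigma.hom_ext
    intro i
    induction i using Fin.lastCases with
    | last => simp [coprod.inr_desc]
    | cast j => simp [coprod.inl_desc]
  inv_hom_id := by
    apply coprod.hom_ext
    · simp only [coprod.inl_desc_assoc, Category.comp_id]
      apply Sigma.hom_ext
      intro j
      simp
    · simp [coprod.inr_desc]

/- ### The main decomposition -/

theorem mainAux [HasFiniteCoproducts C] : ∀ (n : ℕ) (F : C ⥤ AddCommGrpCat.{w}), Reduced F →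
    ∀ X : Fin n → C,
    Nonempty ((F.obj (∐ X) : Type w) ≃+
      DirectSum {S : Finset (Fin n) // S.Nonempty} (fun S => (piece F X S : Type w))) := by
  intro n
  induction n with
  | zero =>
    intro F hF X
    haveI : IsEmpty {S : Finset (Fin 0) // S.Nonempty} := ⟨fun S => (S.2.choose).elim0⟩
    have e : (∐ X) ≅ (0 : C) := by
      refine ⟨0, 0, ?_, ?_⟩
      · exact Sigma.hom_ext _ _ (fun i => i.elim0)
      · exact (isZero_zero C).eq_of_src _ _
    haveI : Subsingleton (F.obj (0 : C)) := hF
    haveI hsub : Subsingleton (F.obj (∐ X) : Type w) :=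
      ⟨fun a b => (mapAddEquiv F e).injective (Subsingleton.elim _ _)⟩
    haveI : Unique (F.obj (∐ X) : Type w) := ⟨⟨0⟩, fun a => Subsingleton.elim a 0⟩
    exact ⟨AddEquiv.ofUnique⟩
  | succ n IH =>
    intro F hF X
    classical
    let X' : Fin n → C := fun i => X i.castSucc
    let Z : C := X (Fin.last n)
    let G : C ⥤ AddCommGrpCat.{w} := cr2Fun F Z
    let W : C := ∐ X'
    obtain ⟨eF⟩ := IH F hF X'
    obtain ⟨eG⟩ := IH G (cr2Fun_reduced F Z) X'
    let e := idxEquiv n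
    -- component equivalence for subsets avoiding `last`
    have a1 : ∀ T : {T : Finset (Fin n) // T.Nonempty},
        Nonempty ((piece F X' T : Type w) ≃+ (piece F X (e (Sum.inl T)) : Type w)) := by
      intro T
      have hk : T.1.card = (T.1.card - 1) + 1 :=
        (Nat.succ_pred_eq_of_pos (Finset.card_pos.mpr T.2)).symm
      have hk' : (T.1.map Fin.castSuccEmb).card = (T.1.card - 1) + 1 := by
        rw [Finset.card_map]; exact hk
      have p1 : piece F X' T = crGrp F (T.1.card - 1)
          (fun i => X' (T.1.orderEmbOfFin hk i)) := piece_eq_crGrp F X' T hk (fun i => rfl)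
      have p2 : piece F X (e (Sum.inl T)) = crGrp F (T.1.card - 1)
          (fun i => X' (T.1.orderEmbOfFin hk i)) := by
        refine piece_eq_crGrp F X (e (Sum.inl T)) hk' (fun i => ?_)
        show X' (T.1.orderEmbOfFin hk i) = X ((T.1.map Fin.castSuccEmb).orderEmbOfFin hk' i)
        rw [orderEmbOfFin_map T.1 hk hk' i]
      exact ⟨addEquivOfEq (p1.trans p2.symm)⟩
    -- component equivalence for the singleton `{last}`
    have a2 : Nonempty ((F.obj Z : Type w) ≃+
        (piece F X (e (Sum.inr (Sum.inl PUnit.unit))) : Type w)) := by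
      have hk : ({Fin.last n} : Finset (Fin (n + 1))).card = 0 + 1 := by simp
      have p : piece F X (e (Sum.inr (Sum.inl PUnit.unit)))
          = crGrp F 0 (fun _ : Fin 1 => Z) := by
        refine piece_eq_crGrp F X _ hk (fun i => ?_)
        show Z = X (({Fin.last n} : Finset (Fin (n + 1))).orderEmbOfFin hk i)
        have hm := Finset.orderEmbOfFin_mem ({Fin.last n} : Finset (Fin (n + 1))) hk i
        rw [Finset.mem_singleton] at hm
        rw [hm]
      exact ⟨(crGrpZeroEquiv F hF (fun _ : Fin 1 => Z)).symm.trans (addEquivOfEq p.symm)⟩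
    -- component equivalence for subsets containing `last`
    have a3 : ∀ T : {T : Finset (Fin n) // T.Nonempty},
        Nonempty ((piece G X' T : Type w) ≃+
          (piece F X (e (Sum.inr (Sum.inr T))) : Type w)) := by
      intro T
      set k := T.1.card - 1 with hkdef
      have hk : T.1.card = k + 1 :=
        (Nat.succ_pred_eq_of_pos (Finset.card_pos.mpr T.2)).symm
      set S : Finset (Fin (n + 1)) := insert (Fin.last n) (T.1.map Fin.castSuccEmb) with hSdef
      have hS : S.card = (k + 1) + 1 := by
        rw [hSdef, Finset.card_insert_of_notMem (last_not_mem_map T.1), Finset.card_map]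
        omega
      have p1 : piece G X' T = crGrp G k (fun i => X' (T.1.orderEmbOfFin hk i)) :=
        piece_eq_crGrp G X' T hk (fun i => rfl)
      obtain ⟨b⟩ := crGrp_bridge F Z k (fun i => X' (T.1.orderEmbOfFin hk i))
        (fun i : Fin (k + 2) => X (S.orderEmbOfFin hS i))
        (fun i => by
          show X (S.orderEmbOfFin hS i.castSucc) = X' (T.1.orderEmbOfFin hk i)
          rw [orderEmbOfFin_insert T.1 hk hS, Fin.snoc_castSucc])
        (by
          show X (S.orderEmbOfFin hS (Fin.last (k + 1))) = Z
          rw [orderEmbOfFin_insert T.1 hk hS, Fin.snoc_last])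
      have p2 : piece F X (e (Sum.inr (Sum.inr T)))
          = crGrp F (k + 1) (fun i : Fin (k + 2) => X (S.orderEmbOfFin hS i)) :=
        piece_eq_crGrp F X _ hS (fun i => rfl)
      exact ⟨(addEquivOfEq p1).trans (b.trans (addEquivOfEq p2.symm))⟩
    let A1 : ∀ T : {T : Finset (Fin n) // T.Nonempty},
        (piece F X' T : Type w) ≃+ (piece F X (e (Sum.inl T)) : Type w) :=
      fun T => (a1 T).some
    let A3 : ∀ T : {T : Finset (Fin n) // T.Nonempty},
        (piece G X' T : Type w) ≃+ (piece F X (e (Sum.inr (Sum.inr T))) : Type w) :=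
      fun T => (a3 T).some
    obtain ⟨A2⟩ := a2
    let d2 : (F.obj Z : Type w) ≃+
        DirectSum PUnit.{1} (fun u => (piece F X (e (Sum.inr (Sum.inl u))) : Type w)) :=
      A2.trans ((DirectSum.id (piece F X (e (Sum.inr (Sum.inl PUnit.unit))) : Type w)
        PUnit.{1}).symm.trans (dsCongr (fun u => addEquivOfEq
          (congrArg (fun y => piece F X (e (Sum.inr (Sum.inl y))))
            (Subsingleton.elim PUnit.unit u)))))
    let big : (F.obj (∐ X) : Type w) ≃+ _ :=
      (mapAddEquiv F (splitIso X)).trans ((binSplit F hF W Z).trans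
        ((eF.trans (dsCongr A1)).prodCongr
          (d2.prodCongr (eG.trans (dsCongr A3)))))
    let s2 := sumSplit (fun x => (piece F X (e x) : Type w))
    let s1 := sumSplit (fun x : PUnit.{1} ⊕ {T : Finset (Fin n) // T.Nonempty} =>
      (piece F X (e (Sum.inr x)) : Type w))
    let t1 : (DirectSum {S : Finset (Fin (n + 1)) // S.Nonempty}
        (fun S => (piece F X S : Type w))) ≃+ _ :=
      (DirectSum.equivCongrLeft e.symm).trans (s2.trans ((AddEquiv.refl _).prodCongr s1))
    exact ⟨big.trans t1.symm⟩

theorem statement0 [HasFiniteCoproducts C] (F : C ⥤ AddCommGrpCat.{w}) (hF : Reduced F)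
    (n : ℕ) (X : Fin n → C) :
    Nonempty ((F.obj (∐ X) : Type w) ≃+
      DirectSum {S : Finset (Fin n) // S.Nonempty} (fun S => (piece F X S : Type w))) := by
  exact mainAux n F hF X

end

end QF
end

section
/- Let Id_Gr : Gr → Gr be the identity functor of the category of groups. There is a natural isomorphism of functors Gr → Gr, Γ₁ : G^{ab} → T₁(Id_Gr)(G), sending the class of g ∈ G in G^{ab} = G/[G,G] to t₁(g). -/
open Monoid
open scoped TensorProduct

universe u

namespace QF

section FreeProducts

variable (G H : Type u) [Group G] [Group H]

/-- The retraction `r₁ : G ∗ H →* G` (identity on `G`, trivial on `H`). -/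
def gr1 : Coprod G H →* G := Coprod.lift (MonoidHom.id G) 1

/-- The retraction `r₂ : G ∗ H →* H` (trivial on `G`, identity on `H`). -/
def gr2 : Coprod G H →* H := Coprod.lift 1 (MonoidHom.id H)

/-- The fold map `∇² : G ∗ G →* G`. -/
def gfold : Coprod G G →* G := Coprod.lift (MonoidHom.id G) (MonoidHom.id G)

/-- The second cross-effect of the identity functor of `Gr`:
`cr₂(Id)(G,H) = ker((r₁,r₂) : G ∗ H → G × H)`. -/
def cr2Id : Subgroup (Coprod G H) := (gr1 G H).ker ⊓ (gr2 G H).ker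

/-- The image of `S₂ : cr₂(Id)(G,G) → G` (inclusion into `G ∗ G` followed by the fold map). -/
def imS2Id : Subgroup G := Subgroup.map (gfold G) (cr2Id G G)

/-- The linearization `T₁(Id_Gr)(G) = G/im(S₂)` of the identity functor
(the image of `S₂` is normal, so we may quotient by its normal closure). -/
def T1Id := G ⧸ Subgroup.normalClosure ((imS2Id G : Subgroup G) : Set G)

noncomputable instance : Group (T1Id G) :=
  QuotientGroup.Quotient.group _

/-- The map induced by `f : G →* H` on `T₁(Id_Gr)`. -/

lemma comap_cr2Id {G G' H H' : Type u} [Group G] [Group G'] [Group H] [Group H']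
    (f : G →* G') (k : H →* H') {z : Coprod G H} (hz : z ∈ cr2Id G H) :
    Coprod.map f k z ∈ cr2Id G' H' := by
  obtain ⟨h1, h2⟩ := hz
  constructor
  · show (gr1 G' H').comp (Coprod.map f k) z = 1
    rw [show (gr1 G' H').comp (Coprod.map f k) = f.comp (gr1 G H) by
      apply Coprod.hom_ext <;> ext x <;> simp [gr1]]
    show f (gr1 G H z) = 1
    rw [show gr1 G H z = 1 from h1, map_one]
  · show (gr2 G' H').comp (Coprod.map f k) z = 1
    rw [show (gr2 G' H').comp (Coprod.map f k) = k.comp (gr2 G H) by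
      apply Coprod.hom_ext <;> ext x <;> simp [gr2]]
    show k (gr2 G H z) = 1
    rw [show gr2 G H z = 1 from h2, map_one]

noncomputable def T1IdMap {G H : Type u} [Group G] [Group H] (f : G →* H) :
    T1Id G →* T1Id H :=
  QuotientGroup.map _ _ f (by
    refine Subgroup.normalClosure_le_normal ?_
    rintro x ⟨z, hz, rfl⟩
    refine Subgroup.subset_normalClosure ?_
    refine ⟨Coprod.map f f z, comap_cr2Id f f hz, ?_⟩
    show (gfold H).comp (Coprod.map f f) z = f (gfold G z)
    rw [show (gfold H).comp (Coprod.map f f) = f.comp (gfold G) by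
      apply Coprod.hom_ext <;> ext x <;> simp [gfold]]
    rfl)


lemma nc_eq_commutator (G : Type u) [Group G] :
    Subgroup.normalClosure ((imS2Id G : Subgroup G) : Set G) = commutator G := by
  apply le_antisymm
  · refine Subgroup.normalClosure_le_normal ?_
    rintro _ ⟨z, ⟨h1, h2⟩, rfl⟩
    have hker : (Abelianization.of (G := G)).ker = commutator G :=
      QuotientGroup.ker_mk' _
    rw [← hker]
    show Abelianization.of (gfold G z) = 1
    have : (Abelianization.of (G := G)).comp (gfold G)
        = (Abelianization.of.comp (gr1 G G)) * (Abelianization.of.comp (gr2 G G)) := by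
      apply Coprod.hom_ext <;> ext x <;> simp [gfold, gr1, gr2]
    have := congrArg (fun f => f z) this
    simp only [MonoidHom.comp_apply, MonoidHom.mul_apply] at this
    rw [this]
    show Abelianization.of (gr1 G G z) * Abelianization.of (gr2 G G z) = 1
    rw [show gr1 G G z = 1 from h1, show gr2 G G z = 1 from h2, map_one, mul_one]
  · rw [commutator_def, Subgroup.commutator_le]
    intro g _ h _
    refine Subgroup.subset_normalClosure ?_
    refine ⟨Coprod.inl g * Coprod.inr h * (Coprod.inl g)⁻¹ * (Coprod.inr h)⁻¹, ⟨?_, ?_⟩, ?_⟩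
    · show gr1 G G _ = 1
      simp [gr1]
    · show gr2 G G _ = 1
      simp [gr2]
    · show gfold G _ = g * h * g⁻¹ * h⁻¹
      simp [gfold, commutatorElement_def]

theorem statement4 :
    ∃ e : ∀ (G : Type u) [Group G], Abelianization G ≃* T1Id G,
      (∀ (G : Type u) [Group G] (g : G),
        e G (Abelianization.of g) = QuotientGroup.mk g) ∧
      (∀ (G H : Type u) [Group G] [Group H] (f : G →* H) (x : Abelianization G),
        e H (Abelianization.map f x) = T1IdMap f (e G x)) := by

  refine ⟨fun G _ => QuotientGroup.quotientMulEquivOfEq (nc_eq_commutator G).symm, ?_, ?_⟩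
  · intro G _ g
    exact QuotientGroup.quotientMulEquivOfEq_mk _ g
  · intro G H _ _ f x
    induction x using Quotient.inductionOn with
    | h g =>
      show QuotientGroup.quotientMulEquivOfEq _ (Abelianization.map f (Abelianization.of g))
        = T1IdMap f (QuotientGroup.quotientMulEquivOfEq _ (Abelianization.of g))
      rw [Abelianization.map_of]
      rw [show (Abelianization.of (f g) : Abelianization H) = QuotientGroup.mk (f g) from rfl,
          show (Abelianization.of g : Abelianization G) = QuotientGroup.mk g from rfl,
          QuotientGroup.quotientMulEquivOfEq_mk, QuotientGroup.quotientMulEquivOfEq_mk]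
      rfl


end FreeProducts

end QF
end

section
/- Let F : C → Ab be a reduced diagonalizable functor, i.e. F = B ∘ Δ_C for some bireduced bifunctor B : C × C → Ab, where Δ_C is the diagonal. Then the linearization of F is trivial: T₁F = 0. -/
open CategoryTheory Limits ZeroObject
open scoped TensorProduct

set_option linter.unusedSectionVars false

universe w v u

namespace QF

variable {C : Type u} [Category.{v} C] [HasZeroObject C] [HasZeroMorphisms C]
  [HasBinaryCoproducts C]

noncomputable section

lemma bimap_zero_snd (B : C × C ⥤ AddCommGrpCat.{w}) (hB : Bireduced B) (X Y : C)
    (z : B.obj (X, Y)) : B.map ((𝟙 X, (0 : Y ⟶ Y)) : (X, Y) ⟶ (X, Y)) z = 0 := by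
  have hf : ((𝟙 X, (0 : Y ⟶ Y)) : (X, Y) ⟶ (X, Y)) =
      @CategoryStruct.comp (C × C) _ (X, Y) (X, (0 : C)) (X, Y)
        (𝟙 X, (0 : Y ⟶ (0 : C))) (𝟙 X, (0 : (0 : C) ⟶ Y)) := by
    apply Prod.ext <;> simp
  rw [hf, B.map_comp]
  show B.map ((𝟙 X, (0 : (0 : C) ⟶ Y)) : (X, (0 : C)) ⟶ (X, Y))
    (B.map ((𝟙 X, (0 : Y ⟶ (0 : C))) : (X, Y) ⟶ (X, (0 : C))) z) = 0
  have : Subsingleton (B.obj (X, (0 : C))) := (hB X).1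
  rw [Subsingleton.elim
    (B.map ((𝟙 X, (0 : Y ⟶ (0 : C))) : (X, Y) ⟶ (X, (0 : C))) z) 0, map_zero]

lemma bimap_zero_fst (B : C × C ⥤ AddCommGrpCat.{w}) (hB : Bireduced B) (X Y : C)
    (z : B.obj (X, Y)) : B.map (((0 : X ⟶ X), 𝟙 Y) : (X, Y) ⟶ (X, Y)) z = 0 := by
  have hf : (((0 : X ⟶ X), 𝟙 Y) : (X, Y) ⟶ (X, Y)) =
      @CategoryStruct.comp (C × C) _ (X, Y) ((0 : C), Y) (X, Y)
        ((0 : X ⟶ (0 : C)), 𝟙 Y) ((0 : (0 : C) ⟶ X), 𝟙 Y) := by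
    apply Prod.ext <;> simp
  rw [hf, B.map_comp]
  show B.map (((0 : (0 : C) ⟶ X), 𝟙 Y) : ((0 : C), Y) ⟶ (X, Y))
    (B.map (((0 : X ⟶ (0 : C)), 𝟙 Y) : (X, Y) ⟶ ((0 : C), Y)) z) = 0
  have : Subsingleton (B.obj ((0 : C), Y)) := (hB Y).2
  rw [Subsingleton.elim
    (B.map (((0 : X ⟶ (0 : C)), 𝟙 Y) : (X, Y) ⟶ ((0 : C), Y)) z) 0, map_zero]

theorem statement6 (B : C × C ⥤ AddCommGrpCat.{w}) (hB : Bireduced B) (X : C) :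
    Subsingleton (TObj (Functor.diag C ⋙ B) 1 X) := by
  set F := Functor.diag C ⋙ B with hF
  have bmap_comp : ∀ {P Q R : C × C} (f : P ⟶ Q) (g : Q ⟶ R) (x : B.obj P),
      B.map (f ≫ g) x = B.map g (B.map f x) := by
    intro P Q R f g x
    rw [B.map_comp]; rfl
  have key : ∀ z : F.obj X, z ∈ imSk F 1 X := by
    intro z
    set w : (F.obj (X ⨿ X) : Type w) :=
      (show (B.obj (X, X) : Type w) →+ B.obj (X ⨿ X, X ⨿ X) from
        (B.map ((coprod.inl, coprod.inr) : (X, X) ⟶ (X ⨿ X, X ⨿ X))).hom) z with hw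
    have hr1 : F.map (r1 X X) w = 0 := by
      show B.map ((r1 X X, r1 X X) : (X ⨿ X, X ⨿ X) ⟶ (X, X)) w = 0
      rw [hw, ← bmap_comp]
      have hcomp : @CategoryStruct.comp (C × C) _ (X, X) (X ⨿ X, X ⨿ X) (X, X)
          ((coprod.inl, coprod.inr)) ((r1 X X, r1 X X)) =
          ((𝟙 X, (0 : X ⟶ X)) : (X, X) ⟶ (X, X)) := by
        apply Prod.ext
        exacts [coprod.inl_desc _ _, coprod.inr_desc _ _]
      rw [hcomp]
      exact bimap_zero_snd B hB X X z
    have hr2 : F.map (r2 X X) w = 0 := by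
      show B.map ((r2 X X, r2 X X) : (X ⨿ X, X ⨿ X) ⟶ (X, X)) w = 0
      rw [hw, ← bmap_comp]
      have hcomp : @CategoryStruct.comp (C × C) _ (X, X) (X ⨿ X, X ⨿ X) (X, X)
          ((coprod.inl, coprod.inr)) ((r2 X X, r2 X X)) =
          (((0 : X ⟶ X), 𝟙 X) : (X, X) ⟶ (X, X)) := by
        apply Prod.ext
        exacts [coprod.inl_desc _ _, coprod.inr_desc _ _]
      rw [hcomp]
      exact bimap_zero_fst B hB X X z
    have hwmem : w ∈ cr2sub F X X := ⟨hr1, hr2⟩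
    have hfold : F.map (coprod.desc (𝟙 X) (𝟙 X)) w = z := by
      show B.map ((coprod.desc (𝟙 X) (𝟙 X), coprod.desc (𝟙 X) (𝟙 X)) :
        (X ⨿ X, X ⨿ X) ⟶ (X, X)) w = z
      rw [hw, ← bmap_comp]
      have hcomp : @CategoryStruct.comp (C × C) _ (X, X) (X ⨿ X, X ⨿ X) (X, X)
          ((coprod.inl, coprod.inr)) ((coprod.desc (𝟙 X) (𝟙 X), coprod.desc (𝟙 X) (𝟙 X))) =
          𝟙 ((X, X) : C × C) := by
        apply Prod.ext
        exacts [coprod.inl_desc _ _, coprod.inr_desc _ _]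
      rw [hcomp, B.map_id]; rfl
    exact ⟨⟨w, hwmem⟩, hfold⟩
  constructor
  intro a b
  refine QuotientAddGroup.induction_on a (fun x => ?_)
  refine QuotientAddGroup.induction_on b (fun y => ?_)
  exact (QuotientAddGroup.eq).mpr (key _)

end

end QF
end

section
/- For every reduced functor F : C → Ab and every X in C, the quadratization of F is given by T₂F(X) = F(X)/{ ((1,1,1)_* − (1,1,0)_* − (1,0,1)_* − (0,1,1)_* + (1,0,0)_* + (0,1,0)_* + (0,0,1)_*)(x) | x ∈ F(X ∨ X ∨ X) }, where (ε₁,ε₂,ε₃) : X∨X∨X → X denotes the map whose restriction to the k-th summand is id if ε_k = 1 and 0 if ε_k = 0. -/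
open CategoryTheory Limits ZeroObject
open scoped TensorProduct

set_option linter.unusedSectionVars false

universe w v u

namespace QF

variable {C : Type u} [Category.{v} C] [HasZeroObject C] [HasZeroMorphisms C]
  [HasBinaryCoproducts C]

noncomputable section

/-- The map `(ε₁,ε₂,ε₃) : X∨X∨X ⟶ X` which is the identity on the `k`-th summand
if `ε_k = true` and zero otherwise. -/
def eps3 (X : C) (a b c : Bool) : ((X ⨿ X) ⨿ X : C) ⟶ X :=
  coprod.desc (coprod.desc (if a then 𝟙 X else 0) (if b then 𝟙 X else 0))
    (if c then 𝟙 X else 0)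

/-- `F` applied to `(ε₁,ε₂,ε₃)`, as a homomorphism. -/
def eps3Hom (F : C ⥤ AddCommGrpCat.{w}) (X : C) (a b c : Bool) :
    (F.obj ((X ⨿ X) ⨿ X) : Type w) →+ F.obj X :=
  (F.map (eps3 X a b c)).hom

/-- For a reduced functor, the image of any zero morphism vanishes pointwise. -/
lemma map_zero_app {F : C ⥤ AddCommGrpCat.{w}} (hF : Reduced F) {Y Z : C} (y : F.obj Y) :
    F.map (0 : Y ⟶ Z) y = 0 := by
  rw [show (0 : Y ⟶ Z) = (0 : Y ⟶ (0 : C)) ≫ (0 : (0 : C) ⟶ Z) by simp, fmap_comp_apply]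
  have h0 : F.map (0 : Y ⟶ (0 : C)) y = 0 := @Subsingleton.elim _ hF _ _
  rw [h0, map_zero]

lemma eps3Hom_apply (F : C ⥤ AddCommGrpCat.{w}) (X : C) (a b c : Bool)
    (z : F.obj ((X ⨿ X) ⨿ X)) : eps3Hom F X a b c z = F.map (eps3 X a b c) z := rfl

/-- The endomorphism of `X ∨ X ∨ X` which is the inclusion on the `k`-th summand
if `ε_k = true` and zero otherwise. -/
def e3 (X : C) (a b c : Bool) : ((X ⨿ X) ⨿ X : C) ⟶ ((X ⨿ X) ⨿ X) :=
  coprod.desc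
    (coprod.desc (if a then coprod.inl ≫ coprod.inl else 0)
      (if b then coprod.inr ≫ coprod.inl else 0))
    (if c then coprod.inr else 0)

lemma e3_comp {X W : C} (a b c : Bool) (f g h : X ⟶ W) :
    e3 X a b c ≫ coprod.desc (coprod.desc f g) h =
      coprod.desc (coprod.desc (if a then f else 0) (if b then g else 0))
        (if c then h else 0) := by
  apply coprod.hom_ext
  · apply coprod.hom_ext
    · cases a <;> simp [e3, coprod.inl_desc, coprod.inr_desc, coprod.inl_desc_assoc, coprod.inr_desc_assoc]
    · cases b <;> simp [e3, coprod.inl_desc, coprod.inr_desc, coprod.inl_desc_assoc, coprod.inr_desc_assoc]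
  · cases c <;> simp [e3, coprod.inl_desc, coprod.inr_desc, coprod.inl_desc_assoc, coprod.inr_desc_assoc]

lemma desc_zero_zero {X Y W : C} : coprod.desc (0 : X ⟶ W) (0 : Y ⟶ W) = 0 := by
  apply coprod.hom_ext <;> simp [coprod.inl_desc, coprod.inr_desc, coprod.inl_desc_assoc, coprod.inr_desc_assoc]

lemma r1A_eq (X : C) :
    r1 (X ⨿ X) X = coprod.desc (coprod.desc coprod.inl coprod.inr) 0 := by
  apply coprod.hom_ext
  · apply coprod.hom_ext <;> simp [r1]
  · simp [r1]

lemma r2A_eq (X : C) :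
    r2 (X ⨿ X) X = coprod.desc (coprod.desc 0 0) (𝟙 X) := by
  apply coprod.hom_ext
  · apply coprod.hom_ext <;> simp [r2, coprod.inl_desc, coprod.inr_desc, coprod.inl_desc_assoc, coprod.inr_desc_assoc]
  · simp [r2, coprod.inl_desc, coprod.inr_desc, coprod.inl_desc_assoc, coprod.inr_desc_assoc]

lemma m1A_eq (X : C) :
    coprod.map (r1 X X) (𝟙 X) = coprod.desc (coprod.desc coprod.inl 0) coprod.inr := by
  apply coprod.hom_ext
  · apply coprod.hom_ext <;> simp [r1, coprod.inl_desc, coprod.inr_desc, coprod.inl_desc_assoc, coprod.inr_desc_assoc]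
  · simp [coprod.inl_desc, coprod.inr_desc, coprod.inl_desc_assoc, coprod.inr_desc_assoc]

lemma m2A_eq (X : C) :
    coprod.map (r2 X X) (𝟙 X) = coprod.desc (coprod.desc 0 coprod.inl) coprod.inr := by
  apply coprod.hom_ext
  · apply coprod.hom_ext <;> simp [r2, coprod.inl_desc, coprod.inr_desc, coprod.inl_desc_assoc, coprod.inr_desc_assoc]
  · simp [coprod.inl_desc, coprod.inr_desc, coprod.inl_desc_assoc, coprod.inr_desc_assoc]

lemma foldNest_eq (X : C) :
    foldNest X 1 X (𝟙 X) = coprod.desc (coprod.desc (𝟙 X) (𝟙 X)) (𝟙 X) := rfl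

lemma eps_ttt (X : C) : eps3 X true true true = foldNest X 1 X (𝟙 X) := by
  rw [foldNest_eq]
  apply coprod.hom_ext
  · apply coprod.hom_ext <;> simp [eps3]
  · simp [eps3]

lemma eps_ttf (X : C) : eps3 X true true false = r1 (X ⨿ X) X ≫ fold X := by
  apply coprod.hom_ext
  · apply coprod.hom_ext <;> simp [eps3, r1, fold]
  · simp [eps3, r1, fold]

lemma eps_fft (X : C) : eps3 X false false true = r2 (X ⨿ X) X := by
  apply coprod.hom_ext
  · apply coprod.hom_ext <;> simp [eps3, r2, coprod.inl_desc, coprod.inr_desc, coprod.inl_desc_assoc, coprod.inr_desc_assoc]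
  · simp [eps3, r2, coprod.inl_desc, coprod.inr_desc, coprod.inl_desc_assoc, coprod.inr_desc_assoc]

lemma eps_tft (X : C) :
    eps3 X true false true = coprod.map (r1 X X) (𝟙 X) ≫ fold X := by
  apply coprod.hom_ext
  · apply coprod.hom_ext <;> simp [eps3, r1, fold]
  · simp [eps3, r1, fold]

lemma eps_tff (X : C) :
    eps3 X true false false = coprod.map (r1 X X) (𝟙 X) ≫ r1 X X := by
  apply coprod.hom_ext
  · apply coprod.hom_ext <;> simp [eps3, r1]
  · simp [eps3, r1]

lemma eps_ftt (X : C) :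
    eps3 X false true true = coprod.map (r2 X X) (𝟙 X) ≫ fold X := by
  apply coprod.hom_ext
  · apply coprod.hom_ext <;> simp [eps3, r2, fold]
  · simp [eps3, r2, fold]

lemma eps_ftf (X : C) :
    eps3 X false true false = coprod.map (r2 X X) (𝟙 X) ≫ r1 X X := by
  apply coprod.hom_ext
  · apply coprod.hom_ext <;> simp [eps3, r1, r2]
  · simp [eps3, r1, r2]

theorem statement11 (F : C ⥤ AddCommGrpCat.{w}) (hF : Reduced F) (X : C) :
    imSk F 2 X = AddMonoidHom.range
      (eps3Hom F X true true true - eps3Hom F X true true false -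
       eps3Hom F X true false true - eps3Hom F X false true true +
       eps3Hom F X true false false + eps3Hom F X false true false +
       eps3Hom F X false false true) := by
  have hz0 : ∀ {Y Z : C} (y : F.obj Y), F.map (0 : Y ⟶ Z) y = 0 :=
    fun y => map_zero_app hF y
  apply le_antisymm
  · rintro x ⟨⟨⟨v, hv1, hv2⟩, hw1, hw2⟩, rfl⟩
    refine ⟨v, ?_⟩
    have h1 : F.map (r1 (X ⨿ X) X) v = 0 := hv1
    have h2 : F.map (r2 (X ⨿ X) X) v = 0 := hv2
    have h3 : F.map (coprod.map (r1 X X) (𝟙 X)) v = 0 := congrArg Subtype.val hw1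
    have h4 : F.map (coprod.map (r2 X X) (𝟙 X)) v = 0 := congrArg Subtype.val hw2
    simp only [AddMonoidHom.sub_apply, AddMonoidHom.add_apply, eps3Hom_apply]
    rw [eps_ttf, eps_fft, eps_tft, eps_tff, eps_ftt, eps_ftf]
    simp only [fmap_comp_apply, h1, h2, h3, h4, map_zero, sub_zero, add_zero]
    rw [eps_ttt]
    rfl
  · rintro x ⟨z, rfl⟩
    set w0 : F.obj ((X ⨿ X) ⨿ X) :=
      F.map (e3 X true true true) z - F.map (e3 X true true false) z -
        F.map (e3 X true false true) z - F.map (e3 X false true true) z +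
        F.map (e3 X true false false) z + F.map (e3 X false true false) z +
        F.map (e3 X false false true) z with hw0
    have hr1 : F.map (r1 (X ⨿ X) X) w0 = 0 := by
      rw [hw0]
      simp only [map_sub, map_add, ← fmap_comp_apply, r1A_eq, e3_comp]
      simp [desc_zero_zero, hz0]
      try abel
    have hr2 : F.map (r2 (X ⨿ X) X) w0 = 0 := by
      rw [hw0]
      simp only [map_sub, map_add, ← fmap_comp_apply, r2A_eq, e3_comp]
      simp [desc_zero_zero, hz0]
      try abel
    have hm1 : F.map (coprod.map (r1 X X) (𝟙 X)) w0 = 0 := by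
      rw [hw0]
      simp only [map_sub, map_add, ← fmap_comp_apply, m1A_eq, e3_comp]
      simp [desc_zero_zero, hz0]
      try abel
    have hm2 : F.map (coprod.map (r2 X X) (𝟙 X)) w0 = 0 := by
      rw [hw0]
      simp only [map_sub, map_add, ← fmap_comp_apply, m2A_eq, e3_comp]
      simp [desc_zero_zero, hz0]
      try abel
    have key : F.map (coprod.desc (coprod.desc (𝟙 X) (𝟙 X)) (𝟙 X)) w0 =
        (eps3Hom F X true true true - eps3Hom F X true true false -
         eps3Hom F X true false true - eps3Hom F X false true true +
         eps3Hom F X true false false + eps3Hom F X false true false +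
         eps3Hom F X false false true) z := by
      rw [hw0]
      simp only [map_sub, map_add, ← fmap_comp_apply, e3_comp]
      simp [AddMonoidHom.sub_apply, AddMonoidHom.add_apply, eps3Hom_apply, eps3]
      try abel
    exact ⟨⟨⟨w0, hr1, hr2⟩, Subtype.ext hm1, Subtype.ext hm2⟩, key⟩

end

end QF
end

section
/- Let X, Y be objects of C, A an abelian group, and φ : C(X,Y) → A a normalized function (φ(0) = 0). Then φ is quadratic (i.e. its cross-effect cr₂(φ) : U_X(Y|Y) → A factors through the bilinearization projection t₁₁ : cr₂U_X(Y,Y) → T₁₁(cr₂U_X)(Y,Y)) if and only if the Z-linear extension φ-bar : U_X(Y) → A factors through the projection t₂ : U_X(Y) → T₂U_X(Y). -/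
open CategoryTheory Limits ZeroObject
open scoped TensorProduct

set_option linter.unusedSectionVars false

universe w v u

namespace QF

variable {C : Type u} [Category.{v} C] [HasZeroObject C] [HasZeroMorphisms C]
  [HasBinaryCoproducts C]

noncomputable section

section QuadraticMaps

variable {A : Type w} [AddCommGroup A]

/-- The `ℤ`-linear extension of a function `φ : C(X,Y) → A` to `ℤ[C(X,Y)]`. -/
def philift {X Y : C} (φ : (X ⟶ Y) → A) : ((X ⟶ Y) →₀ ℤ) →+ A :=
  Finsupp.liftAddHom (fun f => (zmultiplesHom A) (φ f))

/-- The `ℤ`-linear extension `φ̄ : U_X(Y) →+ A` of a normalized function `φ`. -/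
def phibar {X Y : C} (φ : (X ⟶ Y) → A) (hφ : φ 0 = 0) : UObj X Y →+ A :=
  QuotientAddGroup.lift (USub X Y) (philift φ) (by
    intro x hx
    refine AddSubgroup.closure_induction ?_ ?_ ?_ ?_ hx
    · rintro y rfl
      simp [philift, hφ]
    · simp
    · intro a b _ _ h1 h2
      simp only [AddMonoidHom.mem_ker] at h1 h2
      simp [map_add, h1, h2]
    · intro a _ h1
      simp only [AddMonoidHom.mem_ker] at h1
      simp [map_neg, h1])

/-- The second cross-effect of `φ` on `ℤ[C(X, Y∨Y)]`:
the linear extension of `ξ ↦ φ(∇²ξ) − φ(r₁ξ) − φ(r₂ξ)`. -/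
def crphilift {X Y : C} (φ : (X ⟶ Y) → A) : ((X ⟶ Y ⨿ Y) →₀ ℤ) →+ A :=
  Finsupp.liftAddHom (fun ξ => (zmultiplesHom A)
    (φ (ξ ≫ fold Y) - φ (ξ ≫ r1 Y Y) - φ (ξ ≫ r2 Y Y)))

/-- The descent of `crphilift` to `U_X(Y ∨ Y)`. -/
def crphibar {X Y : C} (φ : (X ⟶ Y) → A) (hφ : φ 0 = 0) : UObj X (Y ⨿ Y) →+ A :=
  QuotientAddGroup.lift (USub X (Y ⨿ Y)) (crphilift φ) (by
    intro x hx
    refine AddSubgroup.closure_induction ?_ ?_ ?_ ?_ hx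
    · rintro y rfl
      simp [crphilift, hφ]
    · simp
    · intro a b _ _ h1 h2
      simp only [AddMonoidHom.mem_ker] at h1 h2
      simp [map_add, h1, h2]
    · intro a _ h1
      simp only [AddMonoidHom.mem_ker] at h1
      simp [map_neg, h1])

/-- The second cross-effect `cr₂(φ) : cr₂U_X(Y,Y) →+ A` of a normalized function `φ`. -/
def cr2phi {X Y : C} (φ : (X ⟶ Y) → A) (hφ : φ 0 = 0) :
    (cr2sub (UFun X) Y Y : Type v) →+ A :=
  (crphibar φ hφ).comp (cr2sub (UFun X) Y Y).subtype

section Helpers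
variable {A : Type w} [AddCommGroup A]

lemma uOf_map {X Z Z' : C} (g : Z ⟶ Z') (ξ : X ⟶ Z) :
    (UFun X).map g (uOf ξ) = uOf (ξ ≫ g) := by
  show QuotientAddGroup.map (USub X Z) (USub X Z') _ (USub_le_comap X g)
      (QuotientAddGroup.mk _) = _
  rw [QuotientAddGroup.map_mk]
  unfold uOf
  congr 1
  rw [Finsupp.mapDomain.addMonoidHom_apply, Finsupp.mapDomain_single]

lemma phibar_uOf {X Y : C} (φ : (X ⟶ Y) → A) (hφ : φ 0 = 0) (ψ : X ⟶ Y) :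
    phibar φ hφ (uOf ψ) = φ ψ := by
  show philift φ (Finsupp.single ψ 1) = φ ψ
  simp [philift]

lemma crphibar_uOf {X Y : C} (φ : (X ⟶ Y) → A) (hφ : φ 0 = 0) (η : X ⟶ Y ⨿ Y) :
    crphibar φ hφ (uOf η) = φ (η ≫ fold Y) - φ (η ≫ r1 Y Y) - φ (η ≫ r2 Y Y) := by
  show crphilift φ (Finsupp.single η 1) = _
  simp [crphilift]

lemma uHom_ext {X Z : C} {g₁ g₂ : UObj X Z →+ A}
    (h : ∀ ξ : X ⟶ Z, g₁ (uOf ξ) = g₂ (uOf ξ)) : g₁ = g₂ := by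
  ext x
  refine QuotientAddGroup.induction_on x (fun z => ?_)
  show g₁ (QuotientAddGroup.mk z) = g₂ (QuotientAddGroup.mk z)
  refine Finsupp.induction_linear (motive := fun f =>
    g₁ (QuotientAddGroup.mk f) = g₂ (QuotientAddGroup.mk f)) z ?_ ?_ ?_
  · show g₁ (QuotientAddGroup.mk 0) = g₂ (QuotientAddGroup.mk 0)
    exact (map_zero g₁).trans (map_zero g₂).symm
  · intro f g hf hg
    show g₁ (QuotientAddGroup.mk (f + g)) = g₂ (QuotientAddGroup.mk (f + g))
    rw [show (QuotientAddGroup.mk (f + g) : UObj X Z) =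
      QuotientAddGroup.mk f + QuotientAddGroup.mk g from rfl]
    exact (map_add g₁ (QuotientAddGroup.mk f : UObj X Z) (QuotientAddGroup.mk g)).trans
      ((congrArg₂ (· + ·) hf hg).trans (map_add g₂ _ _).symm)
  · intro a b
    have hb : (QuotientAddGroup.mk (Finsupp.single a b) : UObj X Z) = b • uOf a := by
      show (QuotientAddGroup.mk (Finsupp.single a b) : ((X ⟶ Z) →₀ ℤ) ⧸ USub X Z) =
        b • QuotientAddGroup.mk (Finsupp.single a 1)
      erw [← QuotientAddGroup.mk_zsmul]
      congr 1
      rw [Finsupp.smul_single, smul_eq_mul, mul_one]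
    rw [hb, map_zsmul, map_zsmul, h a]


lemma uMap_zero {X Z Z' : C} (g : Z ⟶ Z') (f : UObj X Z' →+ A) :
    f ((UFun X).map g (0 : UObj X Z)) = 0 := by
  exact map_zero (f.comp ((UFun X).map g).hom)

lemma uMap_add {X Z Z' : C} (g : Z ⟶ Z') (f : UObj X Z' →+ A) (a b : UObj X Z) :
    f ((UFun X).map g (a + b)) = f ((UFun X).map g a) + f ((UFun X).map g b) := by
  exact map_add (f.comp ((UFun X).map g).hom) a b

lemma uMap_neg {X Z Z' : C} (g : Z ⟶ Z') (f : UObj X Z' →+ A) (a : UObj X Z) :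
    f ((UFun X).map g (-a)) = -f ((UFun X).map g a) := by
  exact map_neg (f.comp ((UFun X).map g).hom) a

lemma uObj_induction {X Z : C} {p : UObj X Z → Prop} (h0 : p 0)
    (hadd : ∀ a b, p a → p b → p (a + b)) (hneg : ∀ a, p a → p (-a))
    (hgen : ∀ ξ : X ⟶ Z, p (uOf ξ)) : ∀ x, p x := by
  intro x
  refine QuotientAddGroup.induction_on x (fun z => ?_)
  refine Finsupp.induction_linear (motive := fun f => p (QuotientAddGroup.mk f)) z ?_ ?_ ?_
  · exact h0
  · intro f g hf hg
    exact hadd _ _ hf hg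
  · intro a b
    induction b using Int.induction_on with
    | zero =>
      rw [Finsupp.single_zero]
      exact h0
    | succ n hn =>
      have : (QuotientAddGroup.mk (Finsupp.single a ((n : ℤ) + 1)) : UObj X Z) =
          QuotientAddGroup.mk (Finsupp.single a (n : ℤ)) + uOf a := by
        exact congrArg (fun f => (QuotientAddGroup.mk f : UObj X Z)) (Finsupp.single_add a (n : ℤ) 1)
      rw [this]
      exact hadd _ _ hn (hgen a)
    | pred n hn =>
      have e1 : Finsupp.single a (-(n : ℤ) - 1) =
          Finsupp.single a (-(n : ℤ)) - Finsupp.single a 1 := by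
        rw [← Finsupp.single_sub]
      rw [e1, QuotientAddGroup.mk_sub, sub_eq_add_neg]
      exact hadd _ _ hn (hneg _ (hgen a))

lemma keyA {X Y : C} (φ : (X ⟶ Y) → A) (hφ : φ 0 = 0) (z : UObj X ((Y ⨿ Y) ⨿ Y))
    (h1 : (UFun X).map (r1 (Y ⨿ Y) Y) z = 0)
    (h2 : (UFun X).map (r2 (Y ⨿ Y) Y) z = 0) :
    crphibar φ hφ ((UFun X).map (coprod.map (fold Y) (𝟙 Y)) z) =
      phibar φ hφ ((UFun X).map (coprod.desc (fold Y) (𝟙 Y)) z) := by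
  have key : ∀ w : UObj X ((Y ⨿ Y) ⨿ Y),
      crphibar φ hφ ((UFun X).map (coprod.map (fold Y) (𝟙 Y)) w) =
        phibar φ hφ ((UFun X).map (coprod.desc (fold Y) (𝟙 Y)) w)
        - phibar φ hφ ((UFun X).map (r1 (Y ⨿ Y) Y ≫ fold Y) w)
        - phibar φ hφ ((UFun X).map (r2 (Y ⨿ Y) Y) w) := by
    refine uObj_induction ?_ ?_ ?_ ?_
    · rw [uMap_zero, uMap_zero, uMap_zero, uMap_zero]
      abel
    · intro a b ha hb
      rw [uMap_add, uMap_add, uMap_add, uMap_add, ha, hb]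
      abel
    · intro a ha
      rw [uMap_neg, uMap_neg, uMap_neg, uMap_neg, ha]
      abel
    · intro ξ
      rw [uOf_map, uOf_map, uOf_map, uOf_map, crphibar_uOf, phibar_uOf, phibar_uOf,
        phibar_uOf, Category.assoc,
        show coprod.map (fold Y) (𝟙 Y) ≫ fold Y = coprod.desc (fold Y) (𝟙 Y) from by
          apply coprod.hom_ext <;> simp [fold, coprod.inl_desc, coprod.inr_desc],
        Category.assoc,
        show coprod.map (fold Y) (𝟙 Y) ≫ r1 Y Y = r1 (Y ⨿ Y) Y ≫ fold Y from by
          apply coprod.hom_ext <;> simp [fold, r1, coprod.inl_desc, coprod.inr_desc],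
        Category.assoc,
        show coprod.map (fold Y) (𝟙 Y) ≫ r2 Y Y = r2 (Y ⨿ Y) Y from by
          apply coprod.hom_ext <;> simp [fold, r2, coprod.inl_desc, coprod.inr_desc],
        ← Category.assoc]
  rw [key z, fmap_comp_apply (UFun X) _ _ z, h1, h2]
  erw [map_zero]
  simp

lemma keyC {X Y : C} (φ : (X ⟶ Y) → A) (hφ : φ 0 = 0) (z : UObj X (Y ⨿ (Y ⨿ Y)))
    (h1 : (UFun X).map (r1 Y (Y ⨿ Y)) z = 0)
    (h2 : (UFun X).map (r2 Y (Y ⨿ Y)) z = 0) :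
    crphibar φ hφ ((UFun X).map (coprod.map (𝟙 Y) (fold Y)) z) =
      phibar φ hφ ((UFun X).map (coprod.desc (𝟙 Y) (fold Y)) z) := by
  have key : ∀ w : UObj X (Y ⨿ (Y ⨿ Y)),
      crphibar φ hφ ((UFun X).map (coprod.map (𝟙 Y) (fold Y)) w) =
        phibar φ hφ ((UFun X).map (coprod.desc (𝟙 Y) (fold Y)) w)
        - phibar φ hφ ((UFun X).map (r1 Y (Y ⨿ Y)) w)
        - phibar φ hφ ((UFun X).map (r2 Y (Y ⨿ Y) ≫ fold Y) w) := by
    refine uObj_induction ?_ ?_ ?_ ?_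
    · rw [uMap_zero, uMap_zero, uMap_zero, uMap_zero]
      abel
    · intro a b ha hb
      rw [uMap_add, uMap_add, uMap_add, uMap_add, ha, hb]
      abel
    · intro a ha
      rw [uMap_neg, uMap_neg, uMap_neg, uMap_neg, ha]
      abel
    · intro ξ
      rw [uOf_map, uOf_map, uOf_map, uOf_map, crphibar_uOf, phibar_uOf, phibar_uOf,
        phibar_uOf, Category.assoc,
        show coprod.map (𝟙 Y) (fold Y) ≫ fold Y = coprod.desc (𝟙 Y) (fold Y) from by
          apply coprod.hom_ext <;> simp [fold, coprod.inl_desc, coprod.inr_desc],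
        Category.assoc,
        show coprod.map (𝟙 Y) (fold Y) ≫ r1 Y Y = r1 Y (Y ⨿ Y) from by
          apply coprod.hom_ext <;> simp [fold, r1, coprod.inl_desc, coprod.inr_desc],
        Category.assoc,
        show coprod.map (𝟙 Y) (fold Y) ≫ r2 Y Y = r2 Y (Y ⨿ Y) ≫ fold Y from by
          apply coprod.hom_ext <;> simp [fold, r2, coprod.inl_desc, coprod.inr_desc],
        ← Category.assoc]
  rw [key z, h1, fmap_comp_apply (UFun X) _ _ z, h2]
  erw [map_zero]
  simp

/-- The twist map sending the three summands `a, b, c` of `Y ∨ (Y ∨ Y)` to the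
summands `1, 2, 3` of `(Y ∨ Y) ∨ Y`. -/
def sMap (Y : C) : (Y ⨿ (Y ⨿ Y)) ⟶ ((Y ⨿ Y) ⨿ Y) :=
  coprod.desc (coprod.inl ≫ coprod.inl) (coprod.map coprod.inr (𝟙 Y))

lemma sMap_desc (Y : C) :
    sMap Y ≫ coprod.desc (fold Y) (𝟙 Y) = coprod.desc (𝟙 Y) (fold Y) := by
  apply coprod.hom_ext
  · simp [sMap, fold, coprod.inl_desc, coprod.inr_desc, coprod.inl_desc_assoc, coprod.inr_desc_assoc]
  · apply coprod.hom_ext <;> simp [sMap, fold, coprod.inl_desc, coprod.inr_desc, coprod.inl_desc_assoc, coprod.inr_desc_assoc]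

lemma sMap_r1 (Y : C) : sMap Y ≫ r1 (Y ⨿ Y) Y = coprod.map (𝟙 Y) (r1 Y Y) := by
  apply coprod.hom_ext
  · simp [sMap, r1, coprod.inl_desc, coprod.inr_desc, coprod.inl_desc_assoc, coprod.inr_desc_assoc]
  · apply coprod.hom_ext <;> simp [sMap, r1, coprod.inl_desc, coprod.inr_desc, coprod.inl_desc_assoc, coprod.inr_desc_assoc]

lemma sMap_r2 (Y : C) : sMap Y ≫ r2 (Y ⨿ Y) Y = r2 Y (Y ⨿ Y) ≫ r2 Y Y := by
  apply coprod.hom_ext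
  · simp [sMap, r2, coprod.inl_desc, coprod.inr_desc, coprod.inl_desc_assoc, coprod.inr_desc_assoc]
  · apply coprod.hom_ext <;> simp [sMap, r2, coprod.inl_desc, coprod.inr_desc, coprod.inl_desc_assoc, coprod.inr_desc_assoc]

lemma sMap_mr1 (Y : C) :
    sMap Y ≫ coprod.map (r1 Y Y) (𝟙 Y) = coprod.map (𝟙 Y) (r2 Y Y) := by
  apply coprod.hom_ext
  · simp [sMap, r1, r2, coprod.inl_desc, coprod.inr_desc, coprod.inl_desc_assoc, coprod.inr_desc_assoc]
  · apply coprod.hom_ext <;> simp [sMap, r1, r2, coprod.inl_desc, coprod.inr_desc, coprod.inl_desc_assoc, coprod.inr_desc_assoc]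

lemma sMap_mr2 (Y : C) :
    sMap Y ≫ coprod.map (r2 Y Y) (𝟙 Y) = r2 Y (Y ⨿ Y) := by
  apply coprod.hom_ext
  · simp [sMap, r1, r2, coprod.inl_desc, coprod.inr_desc, coprod.inl_desc_assoc, coprod.inr_desc_assoc]
  · apply coprod.hom_ext <;> simp [sMap, r1, r2, coprod.inl_desc, coprod.inr_desc, coprod.inl_desc_assoc, coprod.inr_desc_assoc]

end Helpers

theorem statement12 {X Y : C} (φ : (X ⟶ Y) → A) (hφ : φ 0 = 0) :
    (∃ ψ : T11Obj (cr2Bif (UFun X)) Y Y →+ A,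
        ∀ z : (cr2Bif (UFun X)).obj (Y, Y),
          ψ (QuotientAddGroup.mk z) = cr2phi φ hφ z) ↔
    (∃ χ : TObj (UFun X) 2 Y →+ A,
        ∀ u : UObj X Y, χ (QuotientAddGroup.mk u) = phibar φ hφ u) := by
  constructor
  · rintro ⟨ψ, hψ⟩
    have hker : ∀ z : (cr2Bif (UFun X)).obj (Y, Y),
        z ∈ N1 (cr2Bif (UFun X)) Y Y ⊔ N2 (cr2Bif (UFun X)) Y Y → cr2phi φ hφ z = 0 := by
      intro z hz
      rw [← hψ z, (QuotientAddGroup.eq_zero_iff z).2 hz]; exact map_zero ψ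
    have hle : ∀ u : UObj X Y, u ∈ imSk (UFun X) 2 Y → phibar φ hφ u = 0 := by
      intro u hu
      obtain ⟨z, hz⟩ := hu
      let z' : cr2sub (cr2Fun (UFun X) Y) Y Y := z
      let w : cr2sub (UFun X) (Y ⨿ Y) Y := z'.1
      have h1 : (UFun X).map (r1 (Y ⨿ Y) Y) w.1 = 0 := w.2.1
      have h2 : (UFun X).map (r2 (Y ⨿ Y) Y) w.1 = 0 := w.2.2
      have h3 : (UFun X).map (coprod.map (r1 Y Y) (𝟙 Y)) w.1 = 0 :=
        congrArg Subtype.val z'.2.1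
      have h4 : (UFun X).map (coprod.map (r2 Y Y) (𝟙 Y)) w.1 = 0 :=
        congrArg Subtype.val z'.2.2
      rw [← hz]
      show phibar φ hφ ((UFun X).map (coprod.desc (fold Y) (𝟙 Y)) w.1) = 0
      rw [← keyA φ hφ w.1 h1 h2]
      exact hker ((cr2Bif (UFun X)).map ((fold Y, 𝟙 Y) : ((Y ⨿ Y, Y) : C × C) ⟶ (Y, Y)) w)
        (AddSubgroup.mem_sup_left
          (AddSubgroup.mem_map_of_mem _ ⟨Subtype.ext h3, Subtype.ext h4⟩))
    exact ⟨QuotientAddGroup.lift (imSk (UFun X) 2 Y) (phibar φ hφ) hle, fun u => rfl⟩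
  · rintro ⟨χ, hχ⟩
    have hkerR : ∀ u : UObj X Y, u ∈ imSk (UFun X) 2 Y → phibar φ hφ u = 0 := by
      intro u hu
      rw [← hχ u]; exact (congrArg χ ((QuotientAddGroup.eq (s := imSk (UFun X) 2 Y)
        (a := (u : (UFun X).obj Y)) (b := 0)).2 (by simpa using (imSk (UFun X) 2 Y).neg_mem (x := (u : (UFun X).obj Y)) hu))).trans (map_zero χ)
    have hN : ∀ e : (cr2Bif (UFun X)).obj (Y, Y),
        e ∈ N1 (cr2Bif (UFun X)) Y Y ⊔ N2 (cr2Bif (UFun X)) Y Y → cr2phi φ hφ e = 0 := by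
      have key : N1 (cr2Bif (UFun X)) Y Y ⊔ N2 (cr2Bif (UFun X)) Y Y ≤
          AddMonoidHom.ker (cr2phi φ hφ) := by
        refine sup_le ?_ ?_
        · intro e he
          obtain ⟨w, hw, rfl⟩ := AddSubgroup.mem_map.mp he
          have h1 : (UFun X).map (r1 (Y ⨿ Y) Y) w.1 = 0 := w.2.1
          have h2 : (UFun X).map (r2 (Y ⨿ Y) Y) w.1 = 0 := w.2.2
          have h3 : (UFun X).map (coprod.map (r1 Y Y) (𝟙 Y)) w.1 = 0 :=
            congrArg Subtype.val hw.1
          have h4 : (UFun X).map (coprod.map (r2 Y Y) (𝟙 Y)) w.1 = 0 :=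
            congrArg Subtype.val hw.2
          show crphibar φ hφ ((UFun X).map (coprod.map (fold Y) (𝟙 Y)) w.1) = 0
          rw [keyA φ hφ w.1 h1 h2]
          exact hkerR _ ⟨(⟨⟨w.1, h1, h2⟩, Subtype.ext h3, Subtype.ext h4⟩ :
            cr2sub (cr2Fun (UFun X) Y) Y Y), rfl⟩
        · intro e he
          obtain ⟨w, hw, rfl⟩ := AddSubgroup.mem_map.mp he
          have h1 : (UFun X).map (r1 Y (Y ⨿ Y)) w.1 = 0 := w.2.1
          have h2 : (UFun X).map (r2 Y (Y ⨿ Y)) w.1 = 0 := w.2.2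
          have h3 : (UFun X).map (coprod.map (𝟙 Y) (r1 Y Y)) w.1 = 0 :=
            congrArg Subtype.val hw.1
          have h4 : (UFun X).map (coprod.map (𝟙 Y) (r2 Y Y)) w.1 = 0 :=
            congrArg Subtype.val hw.2
          show crphibar φ hφ ((UFun X).map (coprod.map (𝟙 Y) (fold Y)) w.1) = 0
          rw [keyC φ hφ w.1 h1 h2,
            show coprod.desc (𝟙 Y) (fold Y) = sMap Y ≫ coprod.desc (fold Y) (𝟙 Y) from
              (sMap_desc Y).symm,
            fmap_comp_apply]
          have m1 : (UFun X).map (r1 (Y ⨿ Y) Y) ((UFun X).map (sMap Y) w.1) = 0 := by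
            rw [← fmap_comp_apply, sMap_r1]; exact h3
          have m2 : (UFun X).map (r2 (Y ⨿ Y) Y) ((UFun X).map (sMap Y) w.1) = 0 := by
            rw [← fmap_comp_apply, sMap_r2, fmap_comp_apply, h2, map_zero]
          have m3 : (UFun X).map (coprod.map (r1 Y Y) (𝟙 Y))
              ((UFun X).map (sMap Y) w.1) = 0 := by
            rw [← fmap_comp_apply, sMap_mr1]; exact h4
          have m4 : (UFun X).map (coprod.map (r2 Y Y) (𝟙 Y))
              ((UFun X).map (sMap Y) w.1) = 0 := by
            rw [← fmap_comp_apply, sMap_mr2]; exact h2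
          exact hkerR _ ⟨(⟨⟨(UFun X).map (sMap Y) w.1, m1, m2⟩,
            Subtype.ext m3, Subtype.ext m4⟩ : cr2sub (cr2Fun (UFun X) Y) Y Y), rfl⟩
      exact fun e he => key he
    exact ⟨QuotientAddGroup.lift _ (cr2phi φ hφ) hN, fun z => rfl⟩


end QuadraticMaps

end

end QF
end

section
/- Let G be a group and H, K two subsets of G containing 1 such that each g ∈ G admits a unique decomposition g = h_g · k_g with h_g ∈ H and k_g ∈ K. Then the map φ : IH ⊕ IK ⊕ (IH ⊗ IK) → IG given by φ(h−1, 0, 0) = h−1, φ(0, k−1, 0) = k−1 and φ(0, 0, (h′−1) ⊗ (k′−1)) = (h′−1)·(k′−1) is an isomorphism of Z-modules. -/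
set_option synthInstance.maxHeartbeats 1000000
set_option maxHeartbeats 1000000


open scoped TensorProduct

universe u

namespace QF

variable (G : Type u) [Group G]

/-- The augmentation map `ε : ℤ[G] → ℤ`. -/
noncomputable def aug : MonoidAlgebra ℤ G →+* ℤ :=
  ((MonoidAlgebra.lift ℤ ℤ G) 1).toRingHom

/-- The augmentation ideal `IG = ker ε`. -/
noncomputable def augIdeal : Ideal (MonoidAlgebra ℤ G) := RingHom.ker (aug G)

/-- For a subset `S ⊆ G`, the subgroup `IS` of `ℤ[G]` generated by the
elements `s − 1`, `s ∈ S`. -/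
noncomputable def ISet (S : Set G) : AddSubgroup (MonoidAlgebra ℤ G) :=
  AddSubgroup.closure ((fun s => MonoidAlgebra.of ℤ G s - 1) '' S)

lemma of_sub_one_mem (g : G) : MonoidAlgebra.of ℤ G g - 1 ∈ (augIdeal G).toAddSubgroup := by
  simp [augIdeal, aug, RingHom.mem_ker, map_sub, MonoidAlgebra.lift_of]

lemma ISet_le (S : Set G) : ISet G S ≤ (augIdeal G).toAddSubgroup := by
  rw [ISet, AddSubgroup.closure_le]
  rintro x ⟨s, _, rfl⟩
  exact of_sub_one_mem G s

/-- Multiplication in `ℤ[G]` as a bilinear map `IH × IK → IG`. -/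
noncomputable def mulBil (Hs Ks : Set G) :
    ↥(ISet G Hs) →ₗ[ℤ] ↥(ISet G Ks) →ₗ[ℤ] ↥((augIdeal G).toAddSubgroup) :=
  LinearMap.mk₂ ℤ
    (fun a b => ⟨(a : MonoidAlgebra ℤ G) * (b : MonoidAlgebra ℤ G), by
      have ha : aug G (a : MonoidAlgebra ℤ G) = 0 := by
        have := ISet_le G Hs a.2
        simpa [augIdeal, RingHom.mem_ker] using this
      simp [augIdeal, RingHom.mem_ker, map_mul, ha]⟩)
    (by intro a a' b; apply Subtype.ext; simp [add_mul])
    (by intro c a b; apply Subtype.ext; simp [smul_mul_assoc, mul_assoc])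
    (by intro a b b'; apply Subtype.ext; simp [mul_add])
    (by intro c a b
        apply Subtype.ext
        show (a : MonoidAlgebra ℤ G) * ((c • b : ↥(ISet G Ks)) : MonoidAlgebra ℤ G) =
          c • ((a : MonoidAlgebra ℤ G) * (b : MonoidAlgebra ℤ G))
        simp only [AddSubgroupClass.coe_zsmul, zsmul_eq_mul]
        rw [← mul_assoc, ← (Int.cast_commute c ((a : MonoidAlgebra ℤ G))).eq, mul_assoc])

/-- The map `φ : IH ⊕ IK ⊕ (IH ⊗ IK) → IG` given by the two inclusions and by
`(h′−1) ⊗ (k′−1) ↦ (h′−1)·(k′−1)`. -/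
noncomputable def phi17 (Hs Ks : Set G) :
    (↥(ISet G Hs) × ↥(ISet G Ks) × (↥(ISet G Hs) ⊗[ℤ] ↥(ISet G Ks))) →+
      ↥((augIdeal G).toAddSubgroup) :=
  ((AddSubgroup.inclusion (ISet_le G Hs)).comp
      (AddMonoidHom.fst _ _)) +
  ((AddSubgroup.inclusion (ISet_le G Ks)).comp
      ((AddMonoidHom.fst _ _).comp (AddMonoidHom.snd _ _))) +
  ((TensorProduct.lift (mulBil G Hs Ks)).toAddMonoidHom.comp
      ((AddMonoidHom.snd _ _).comp (AddMonoidHom.snd _ _)))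

variable {G}

lemma mem_ISet {S : Set G} {s : G} (hs : s ∈ S) :
    MonoidAlgebra.of ℤ G s - 1 ∈ ISet G S :=
  AddSubgroup.subset_closure ⟨s, hs, rfl⟩

variable (Hs Ks : Set G) (d : G → G × G)
  (hdH : ∀ g, (d g).1 ∈ Hs) (hdK : ∀ g, (d g).2 ∈ Ks)

noncomputable def Afun (g : G) : ↥(ISet G Hs) :=
  ⟨MonoidAlgebra.of ℤ G (d g).1 - 1, mem_ISet (hdH g)⟩

noncomputable def Bfun (g : G) : ↥(ISet G Ks) :=
  ⟨MonoidAlgebra.of ℤ G (d g).2 - 1, mem_ISet (hdK g)⟩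

noncomputable def psi :
    MonoidAlgebra ℤ G →+
      (↥(ISet G Hs) × ↥(ISet G Ks) × (↥(ISet G Hs) ⊗[ℤ] ↥(ISet G Ks))) :=
  (Finsupp.liftAddHom fun g =>
    zmultiplesHom _ (Afun Hs d hdH g, Bfun Ks d hdK g, Afun Hs d hdH g ⊗ₜ[ℤ] Bfun Ks d hdK g)).comp
    (MonoidAlgebra.coeffAddEquiv (R := ℤ) (M := G)).toAddMonoidHom

lemma psi_of (g : G) :
    psi Hs Ks d hdH hdK (MonoidAlgebra.of ℤ G g) =
      (Afun Hs d hdH g, Bfun Ks d hdK g, Afun Hs d hdH g ⊗ₜ[ℤ] Bfun Ks d hdK g) := by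
  show psi Hs Ks d hdH hdK (MonoidAlgebra.single g 1) = _
  rw [psi]
  show Finsupp.liftAddHom _ (Finsupp.single g (1 : ℤ)) = _
  erw [Finsupp.liftAddHom_apply_single]
  rw [zmultiplesHom_apply, one_zsmul]



variable {Hs Ks d}

lemma Afun_eq {g h k : G} (hdu : ∀ g h k, h ∈ Hs → k ∈ Ks → h * k = g → d g = (h, k))
    (hh : h ∈ Hs) (hk : k ∈ Ks) (he : h * k = g) :
    Afun Hs d hdH g = ⟨MonoidAlgebra.of ℤ G h - 1, mem_ISet hh⟩ :=
  Subtype.ext (by show MonoidAlgebra.of ℤ G (d g).1 - 1 = _; rw [hdu g h k hh hk he])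

lemma Bfun_eq {g h k : G} (hdu : ∀ g h k, h ∈ Hs → k ∈ Ks → h * k = g → d g = (h, k))
    (hh : h ∈ Hs) (hk : k ∈ Ks) (he : h * k = g) :
    Bfun Ks d hdK g = ⟨MonoidAlgebra.of ℤ G k - 1, mem_ISet hk⟩ :=
  Subtype.ext (by show MonoidAlgebra.of ℤ G (d g).2 - 1 = _; rw [hdu g h k hh hk he])

lemma sub_one_eq_zero {S : Set G} (h1 : (1 : G) ∈ S) :
    (⟨MonoidAlgebra.of ℤ G 1 - 1, mem_ISet h1⟩ : ↥(ISet G S)) = 0 :=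
  Subtype.ext (by show MonoidAlgebra.of ℤ G 1 - 1 = 0; rw [map_one, sub_self])

variable (hdu : ∀ g h k, h ∈ Hs → k ∈ Ks → h * k = g → d g = (h, k))
  (h1H : (1 : G) ∈ Hs) (h1K : (1 : G) ∈ Ks)

include hdu h1K in
lemma psi_of_H {h : G} (hh : h ∈ Hs) :
    psi Hs Ks d hdH hdK (MonoidAlgebra.of ℤ G h) =
      (⟨MonoidAlgebra.of ℤ G h - 1, mem_ISet hh⟩, 0, 0) := by
  rw [psi_of, Afun_eq hdH hdu hh h1K (mul_one h),
    Bfun_eq hdK hdu hh h1K (mul_one h), sub_one_eq_zero h1K, TensorProduct.tmul_zero]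

include hdu h1H in
lemma psi_of_K {k : G} (hk : k ∈ Ks) :
    psi Hs Ks d hdH hdK (MonoidAlgebra.of ℤ G k) =
      (0, ⟨MonoidAlgebra.of ℤ G k - 1, mem_ISet hk⟩, 0) := by
  rw [psi_of, Afun_eq hdH hdu h1H hk (one_mul k),
    Bfun_eq hdK hdu h1H hk (one_mul k), sub_one_eq_zero h1H, TensorProduct.zero_tmul]

include hdu h1H h1K in
lemma psi_one : psi Hs Ks d hdH hdK 1 = 0 := by
  have h1 : (1 : MonoidAlgebra ℤ G) = MonoidAlgebra.of ℤ G 1 := rfl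
  rw [h1, psi_of_H hdH hdK hdu h1K h1H, sub_one_eq_zero h1H]
  rfl

include hdu in
lemma psi_of_mul {h k : G} (hh : h ∈ Hs) (hk : k ∈ Ks) :
    psi Hs Ks d hdH hdK (MonoidAlgebra.of ℤ G (h * k)) =
      (⟨MonoidAlgebra.of ℤ G h - 1, mem_ISet hh⟩, ⟨MonoidAlgebra.of ℤ G k - 1, mem_ISet hk⟩,
        (⟨MonoidAlgebra.of ℤ G h - 1, mem_ISet hh⟩ : ↥(ISet G Hs)) ⊗ₜ[ℤ]
          (⟨MonoidAlgebra.of ℤ G k - 1, mem_ISet hk⟩ : ↥(ISet G Ks))) := by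
  rw [psi_of, Afun_eq hdH hdu hh hk rfl, Bfun_eq hdK hdu hh hk rfl]


include hdu h1H h1K in
lemma key1 : ∀ x (hx : x ∈ ISet G Hs),
    psi Hs Ks d hdH hdK x = (⟨x, hx⟩, 0, 0) := by
  intro x hx
  have hx' : x ∈ AddSubgroup.closure ((fun s => MonoidAlgebra.of ℤ G s - 1) '' Hs) := hx
  induction hx' using AddSubgroup.closure_induction with
  | mem x hmem =>
      obtain ⟨h, hh, rfl⟩ := hmem
      rw [map_sub, psi_of_H hdH hdK hdu h1K hh, psi_one hdH hdK hdu h1H h1K, sub_zero]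
  | zero => rw [map_zero]; rfl
  | add x y cx cy ihx ihy => rw [map_add, ihx cx, ihy cy]; rfl
  | neg x cx ih => rw [map_neg, ih cx]; rfl

include hdu h1H h1K in
lemma key2 : ∀ y (hy : y ∈ ISet G Ks),
    psi Hs Ks d hdH hdK y = (0, ⟨y, hy⟩, 0) := by
  intro y hy
  have hy' : y ∈ AddSubgroup.closure ((fun s => MonoidAlgebra.of ℤ G s - 1) '' Ks) := hy
  induction hy' using AddSubgroup.closure_induction with
  | mem y hmem =>
      obtain ⟨k, hk, rfl⟩ := hmem
      rw [map_sub, psi_of_K hdH hdK hdu h1H hk, psi_one hdH hdK hdu h1H h1K, sub_zero]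
  | zero => rw [map_zero]; rfl
  | add x y cx cy ihx ihy => rw [map_add, ihx cx, ihy cy]; rfl
  | neg x cx ih => rw [map_neg, ih cx]; rfl

include hdu h1H h1K in
lemma key3 : ∀ x (hx : x ∈ ISet G Hs) y (hy : y ∈ ISet G Ks),
    psi Hs Ks d hdH hdK (x * y) =
      (0, 0, (⟨x, hx⟩ : ↥(ISet G Hs)) ⊗ₜ[ℤ] (⟨y, hy⟩ : ↥(ISet G Ks))) := by
  intro x hx
  have hx' : x ∈ AddSubgroup.closure ((fun s => MonoidAlgebra.of ℤ G s - 1) '' Hs) := hx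
  induction hx' using AddSubgroup.closure_induction with
  | mem x hmem =>
      obtain ⟨h, hh, rfl⟩ := hmem
      intro y hy
      have hy' : y ∈ AddSubgroup.closure ((fun s => MonoidAlgebra.of ℤ G s - 1) '' Ks) := hy
      induction hy' using AddSubgroup.closure_induction with
      | mem y hmem' =>
          obtain ⟨k, hk, rfl⟩ := hmem'
          have expand : (MonoidAlgebra.of ℤ G h - 1) * (MonoidAlgebra.of ℤ G k - 1) =
              MonoidAlgebra.of ℤ G (h * k) - MonoidAlgebra.of ℤ G h
                - MonoidAlgebra.of ℤ G k + 1 := by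
            rw [map_mul]; noncomm_ring
          rw [expand, map_add, map_sub, map_sub, psi_of_mul hdH hdK hdu hh hk,
            psi_of_H hdH hdK hdu h1K hh, psi_of_K hdH hdK hdu h1H hk,
            psi_one hdH hdK hdu h1H h1K]
          refine Prod.ext (by simp) (Prod.ext (by simp) (by simp))
      | zero =>
          rw [mul_zero, map_zero]
          exact Prod.ext (by simp) (Prod.ext (by simp)
            (TensorProduct.tmul_zero _ _).symm)
      | add y z cy cz ihy ihz =>
          rw [mul_add, map_add, ihy cy, ihz cz]
          exact Prod.ext (by simp) (Prod.ext (by simp)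
            (TensorProduct.tmul_add _ _ _).symm)
      | neg y cy ihy =>
          rw [mul_neg, map_neg, ihy cy]
          exact Prod.ext (by simp) (Prod.ext (by simp)
            (TensorProduct.tmul_neg _ _).symm)
  | zero =>
      intro y hy
      rw [zero_mul, map_zero]
      exact Prod.ext (by simp) (Prod.ext (by simp) (TensorProduct.zero_tmul _ _).symm)
  | add x z cx cz ihx ihz =>
      intro y hy
      rw [add_mul, map_add, ihx cx y hy, ihz cz y hy]
      exact Prod.ext (by simp) (Prod.ext (by simp) (TensorProduct.add_tmul _ _ _).symm)
  | neg x cx ihx =>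
      intro y hy
      rw [neg_mul, map_neg, ihx cx y hy]
      exact Prod.ext (by simp) (Prod.ext (by simp) (TensorProduct.neg_tmul _ _).symm)


lemma phi_val (m : ↥(ISet G Hs) × ↥(ISet G Ks) × (↥(ISet G Hs) ⊗[ℤ] ↥(ISet G Ks))) :
    ((phi17 G Hs Ks m : ↥((augIdeal G).toAddSubgroup)) : MonoidAlgebra ℤ G) =
      (m.1 : MonoidAlgebra ℤ G) + (m.2.1 : MonoidAlgebra ℤ G) +
        ((TensorProduct.lift (mulBil G Hs Ks) m.2.2 :
            ↥((augIdeal G).toAddSubgroup)) : MonoidAlgebra ℤ G) := rfl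

include hdu h1H h1K in
lemma keyT : ∀ t : ↥(ISet G Hs) ⊗[ℤ] ↥(ISet G Ks),
    psi Hs Ks d hdH hdK
        ((TensorProduct.lift (mulBil G Hs Ks) t :
            ↥((augIdeal G).toAddSubgroup)) : MonoidAlgebra ℤ G) = (0, 0, t) := by
  intro t
  induction t using TensorProduct.induction_on with
  | zero => rw [map_zero, ZeroMemClass.coe_zero, map_zero]; rfl
  | tmul a b =>
      rw [TensorProduct.lift.tmul]
      have := key3 hdH hdK hdu h1H h1K a.1 a.2 b.1 b.2
      exact this
  | add x y ihx ihy =>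
      rw [map_add, AddSubgroup.coe_add, map_add, ihx, ihy]
      exact Prod.ext (by simp) (Prod.ext (by simp) rfl)


omit hdu h1H h1K in
lemma main (hdm : ∀ g, (d g).1 * (d g).2 = g) : ∀ y : MonoidAlgebra ℤ G,
    ((phi17 G Hs Ks (psi Hs Ks d hdH hdK y) : ↥((augIdeal G).toAddSubgroup)) :
        MonoidAlgebra ℤ G) = y - ((aug G y : ℤ) : MonoidAlgebra ℤ G) := by
  have haug : ∀ g : G, aug G (MonoidAlgebra.of ℤ G g) = 1 := fun g => by
    simp [aug, MonoidAlgebra.lift_of]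
  have hext : ((augIdeal G).toAddSubgroup.subtype.comp
      ((phi17 G Hs Ks).comp (psi Hs Ks d hdH hdK))) =
      (AddMonoidHom.id (MonoidAlgebra ℤ G)) -
        ((Int.castRingHom (MonoidAlgebra ℤ G)).toAddMonoidHom.comp
          (aug G).toAddMonoidHom) := by
    refine MonoidAlgebra.addHom_ext' fun g => AddMonoidHom.ext_int ?_
    show ((phi17 G Hs Ks (psi Hs Ks d hdH hdK (MonoidAlgebra.of ℤ G g)) :
        ↥((augIdeal G).toAddSubgroup)) : MonoidAlgebra ℤ G) =
      MonoidAlgebra.of ℤ G g - ((aug G (MonoidAlgebra.of ℤ G g) : ℤ) : MonoidAlgebra ℤ G)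
    rw [haug g, Int.cast_one, psi_of, phi_val, TensorProduct.lift.tmul]
    show (MonoidAlgebra.of ℤ G (d g).1 - 1) + (MonoidAlgebra.of ℤ G (d g).2 - 1) +
        (MonoidAlgebra.of ℤ G (d g).1 - 1) * (MonoidAlgebra.of ℤ G (d g).2 - 1) = _
    have : (MonoidAlgebra.of ℤ G (d g).1 - 1) + (MonoidAlgebra.of ℤ G (d g).2 - 1) +
        (MonoidAlgebra.of ℤ G (d g).1 - 1) * (MonoidAlgebra.of ℤ G (d g).2 - 1) =
        MonoidAlgebra.of ℤ G (d g).1 * MonoidAlgebra.of ℤ G (d g).2 - 1 := by noncomm_ring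
    rw [this, ← map_mul, hdm g]
  intro y
  exact DFunLike.congr_fun hext y


variable (G)

theorem statement17 (Hs Ks : Set G) (h1H : (1 : G) ∈ Hs) (h1K : (1 : G) ∈ Ks)
    (huniq : ∀ g : G, ∃! p : G × G, p.1 ∈ Hs ∧ p.2 ∈ Ks ∧ p.1 * p.2 = g) :
    Function.Bijective (phi17 G Hs Ks) := by
  classical
  choose d hd using fun g => (huniq g).exists
  have hdH : ∀ g, (d g).1 ∈ Hs := fun g => (hd g).1
  have hdK : ∀ g, (d g).2 ∈ Ks := fun g => (hd g).2.1
  have hdm : ∀ g, (d g).1 * (d g).2 = g := fun g => (hd g).2.2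
  have hdu : ∀ g h k, h ∈ Hs → k ∈ Ks → h * k = g → d g = (h, k) := fun g h k hh hk he =>
    (huniq g).unique (hd g) ⟨hh, hk, he⟩
  have left : ∀ m, psi Hs Ks d hdH hdK
      ((phi17 G Hs Ks m : ↥((augIdeal G).toAddSubgroup)) : MonoidAlgebra ℤ G) = m := by
    rintro ⟨a, b, t⟩
    rw [phi_val, map_add, map_add, key1 hdH hdK hdu h1H h1K a.1 a.2,
      key2 hdH hdK hdu h1H h1K b.1 b.2, keyT hdH hdK hdu h1H h1K t]
    exact Prod.ext (by simp) (Prod.ext (by simp) (by simp))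
  constructor
  · intro m m' he
    rw [← left m, he, left m']
  · intro x
    refine ⟨psi Hs Ks d hdH hdK x.1, Subtype.ext ?_⟩
    rw [main hdH hdK hdm x.1]
    have hx0 : aug G x.1 = 0 := x.2
    rw [hx0, Int.cast_zero, sub_zero]

end QF
end

section
/- Let G and H be groups. Then for all g ∈ G, h ∈ H and all integers n, the following identity holds in T₁₁(cr₂(Id_Gr))(G,H): t₁₁( ((i₁g)(i₂h))ⁿ (i₂h)^{−n} (i₁g)^{−n} ) = t₁₁( [i₂h, i₁g]^{n(n−1)/2} ), where the products are taken in the free product G ∗ H and [a,b] = aba^{−1}b^{−1}. -/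
open Monoid
open scoped TensorProduct
open scoped commutatorElement

universe u

namespace QF

section FreeProducts

variable (G H : Type u) [Group G] [Group H]

/-- The image of `S₂` applied in the first variable of the bifunctor `cr₂(Id)`. -/
def N1g : Subgroup (Coprod G H) :=
  Subgroup.map (Coprod.map (gfold G) (MonoidHom.id H))
    (cr2Id (Coprod G G) H ⊓ (Coprod.map (gr1 G G) (MonoidHom.id H)).ker
      ⊓ (Coprod.map (gr2 G G) (MonoidHom.id H)).ker)

/-- The image of `S₂` applied in the second variable of the bifunctor `cr₂(Id)`. -/
def N2g : Subgroup (Coprod G H) :=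
  Subgroup.map (Coprod.map (MonoidHom.id G) (gfold H))
    (cr2Id G (Coprod H H) ⊓ (Coprod.map (MonoidHom.id G) (gr1 H H)).ker
      ⊓ (Coprod.map (MonoidHom.id G) (gr2 H H)).ker)

/-- The bilinearization `T₁₁(cr₂(Id_Gr))(G,H)`: the quotient of `cr₂(Id)(G,H)` by the
normal subgroup generated by the images of `S₂` applied in each variable. -/
def T11crId := ↥(cr2Id G H) ⧸
  Subgroup.normalClosure
    ((((N1g G H ⊔ N2g G H).subgroupOf (cr2Id G H)) : Subgroup ↥(cr2Id G H)) : Set ↥(cr2Id G H))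

noncomputable instance : Group (T11crId G H) := QuotientGroup.Quotient.group _

lemma comm_zpow_mem (g : G) (h : H) (k : ℤ) :
    ⁅(Coprod.inr h : Coprod G H), Coprod.inl g⁆ ^ k ∈ cr2Id G H := by
  refine Subgroup.zpow_mem _ ?_ k
  refine ⟨?_, ?_⟩ <;>
  · show _ = 1
    rw [map_commutatorElement]
    simp [gr1, gr2]

lemma elt19_mem (g : G) (h : H) (n : ℤ) :
    ((Coprod.inl g : Coprod G H) * Coprod.inr h) ^ n * (Coprod.inr h : Coprod G H) ^ (-n) *
      (Coprod.inl g : Coprod G H) ^ (-n) ∈ cr2Id G H := by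
  refine ⟨?_, ?_⟩ <;>
  · show _ = 1
    simp [gr1, gr2]

-- ===== auxiliary material =====

lemma mk_one_of_mem {z : Coprod G H} (hz : z ∈ cr2Id G H)
    (hN : z ∈ N1g G H ⊔ N2g G H) :
    (QuotientGroup.mk (⟨z, hz⟩ : cr2Id G H) : T11crId G H) = 1 := by
  refine (QuotientGroup.eq_one_iff _).mpr ?_
  exact Subgroup.subset_normalClosure (by rwa [SetLike.mem_coe, Subgroup.mem_subgroupOf])

variable {G H}

lemma comm_mem (g : G) (h : H) : ⁅(Coprod.inr h : Coprod G H), Coprod.inl g⁆ ∈ cr2Id G H := by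
  simpa using comm_zpow_mem G H g h 1

lemma cm_mem (g : G) (h : H) (m : ℤ) :
    ⁅(Coprod.inr h : Coprod G H) ^ m, Coprod.inl g⁆ ∈ cr2Id G H := by
  refine ⟨?_, ?_⟩ <;>
  · show _ = 1
    simp only [commutatorElement_def, map_mul, map_inv, map_zpow, gr1, gr2,
      Coprod.lift_apply_inl, Coprod.lift_apply_inr, MonoidHom.id_apply, MonoidHom.one_apply,
      one_zpow, mul_one, one_mul]
    group

lemma conjc_mem (g : G) (h : H) (j m : ℤ) :
    ⁅(Coprod.inl g : Coprod G H) ^ j, ⁅(Coprod.inr h : Coprod G H) ^ m, Coprod.inl g⁆⁆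
      ∈ cr2Id G H := by
  refine ⟨?_, ?_⟩ <;>
  · show _ = 1
    simp only [commutatorElement_def, map_mul, map_inv, map_zpow, gr1, gr2,
      Coprod.lift_apply_inl, Coprod.lift_apply_inr, MonoidHom.id_apply, MonoidHom.one_apply,
      one_zpow, mul_one, one_mul]
    group

lemma conjc_N1 (g : G) (h : H) (j m : ℤ) :
    ⁅(Coprod.inl g : Coprod G H) ^ j, ⁅(Coprod.inr h : Coprod G H) ^ m, Coprod.inl g⁆⁆
      ∈ N1g G H := by
  refine Subgroup.mem_map.mpr
    ⟨⁅(Coprod.inl (Coprod.inl g) : Coprod (Coprod G G) H) ^ j,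
        ⁅(Coprod.inr h : Coprod (Coprod G G) H) ^ m, Coprod.inl (Coprod.inr g)⁆⁆,
      ⟨⟨⟨?_, ?_⟩, ?_⟩, ?_⟩, ?_⟩ <;>
  · show _ = _
    simp only [commutatorElement_def, map_mul, map_inv, map_zpow, gr1, gr2, gfold,
      Coprod.map_apply_inl, Coprod.map_apply_inr,
      Coprod.lift_apply_inl, Coprod.lift_apply_inr, MonoidHom.id_apply, MonoidHom.one_apply,
      map_one, one_zpow, mul_one, one_mul]
    all_goals group

def linElt (g : G) (h : H) (m : ℤ) : Coprod G H :=
  ⁅(Coprod.inr h : Coprod G H) ^ m * Coprod.inr h, Coprod.inl g⁆ *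
    ⁅(Coprod.inr h : Coprod G H), Coprod.inl g⁆⁻¹ *
    ⁅(Coprod.inr h : Coprod G H) ^ m, Coprod.inl g⁆⁻¹

lemma lin_mem (g : G) (h : H) (m : ℤ) : linElt g h m ∈ cr2Id G H := by
  refine ⟨?_, ?_⟩ <;>
  · show _ = 1
    simp only [linElt, commutatorElement_def, map_mul, map_inv, map_zpow, gr1, gr2,
      Coprod.lift_apply_inl, Coprod.lift_apply_inr, MonoidHom.id_apply, MonoidHom.one_apply,
      one_zpow, mul_one, one_mul]
    group

lemma lin_N2 (g : G) (h : H) (m : ℤ) : linElt g h m ∈ N2g G H := by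
  refine Subgroup.mem_map.mpr
    ⟨⁅(Coprod.inr (Coprod.inl h) : Coprod G (Coprod H H)) ^ m * Coprod.inr (Coprod.inr h),
        Coprod.inl g⁆ *
        ⁅(Coprod.inr (Coprod.inr h) : Coprod G (Coprod H H)), Coprod.inl g⁆⁻¹ *
        ⁅(Coprod.inr (Coprod.inl h) : Coprod G (Coprod H H)) ^ m, Coprod.inl g⁆⁻¹,
      ⟨⟨⟨?_, ?_⟩, ?_⟩, ?_⟩, ?_⟩ <;>
  · show _ = _
    simp only [linElt, commutatorElement_def, map_mul, map_inv, map_zpow, gr1, gr2, gfold,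
      Coprod.map_apply_inl, Coprod.map_apply_inr,
      Coprod.lift_apply_inl, Coprod.lift_apply_inr, MonoidHom.id_apply, MonoidHom.one_apply,
      map_one, one_zpow, mul_one, one_mul]
    all_goals group

def celt (g : G) (h : H) : cr2Id G H :=
  ⟨⁅(Coprod.inr h : Coprod G H), Coprod.inl g⁆, comm_mem g h⟩

def cmelt (g : G) (h : H) (m : ℤ) : cr2Id G H :=
  ⟨⁅(Coprod.inr h : Coprod G H) ^ m, Coprod.inl g⁆, cm_mem g h m⟩

def welt (g : G) (h : H) (n : ℤ) : cr2Id G H :=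
  ⟨((Coprod.inl g : Coprod G H) * Coprod.inr h) ^ n * (Coprod.inr h : Coprod G H) ^ (-n) *
      (Coprod.inl g : Coprod G H) ^ (-n), elt19_mem G H g h n⟩

lemma t_lin (g : G) (h : H) (m : ℤ) :
    (QuotientGroup.mk (cmelt g h (m + 1)) : T11crId G H) =
      QuotientGroup.mk (cmelt g h m) * QuotientGroup.mk (celt g h) := by
  have hsplit : cmelt g h (m + 1) =
      ⟨linElt g h m, lin_mem g h m⟩ * cmelt g h m * celt g h := by
    apply Subtype.ext
    show ⁅(Coprod.inr h : Coprod G H) ^ (m + 1), Coprod.inl g⁆ =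
      linElt g h m * ⁅(Coprod.inr h : Coprod G H) ^ m, Coprod.inl g⁆ *
        ⁅(Coprod.inr h : Coprod G H), Coprod.inl g⁆
    rw [zpow_add_one]
    simp only [linElt, commutatorElement_def]
    group
  rw [hsplit, QuotientGroup.mk_mul, QuotientGroup.mk_mul,
    mk_one_of_mem G H (lin_mem g h m) (Subgroup.mem_sup_right (lin_N2 g h m)), one_mul]

lemma t_cm (g : G) (h : H) (m : ℤ) :
    (QuotientGroup.mk (cmelt g h m) : T11crId G H) =
      (QuotientGroup.mk (celt g h) : T11crId G H) ^ m := by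
  induction m using Int.induction_on with
  | zero =>
    rw [zpow_zero, show cmelt g h 0 = 1 from Subtype.ext (by simp [cmelt])]
    exact QuotientGroup.mk_one _
  | succ n ih =>
    rw [t_lin, ih, zpow_add, zpow_one]
  | pred n ih =>
    have h1 := t_lin g h (-(n : ℤ) - 1)
    rw [show (-(n : ℤ) - 1 + 1) = -(n:ℤ) by ring, ih] at h1
    have h2 : (QuotientGroup.mk (cmelt g h (-(n:ℤ) - 1)) : T11crId G H) =
        (QuotientGroup.mk (celt g h) : T11crId G H) ^ (-(n:ℤ)) *
          ((QuotientGroup.mk (celt g h) : T11crId G H))⁻¹ := by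
      rw [h1]; group
    rw [h2]; group

lemma t_conjc (g : G) (h : H) (j m : ℤ) :
    (QuotientGroup.mk (⟨⁅(Coprod.inl g : Coprod G H) ^ j,
        ⁅(Coprod.inr h : Coprod G H) ^ m, Coprod.inl g⁆⁆, conjc_mem g h j m⟩ : cr2Id G H) :
      T11crId G H) = 1 :=
  mk_one_of_mem G H _ (Subgroup.mem_sup_left (conjc_N1 g h j m))

lemma t_w_step (g : G) (h : H) (n : ℤ) :
    (QuotientGroup.mk (welt g h (n + 1)) : T11crId G H) =
      QuotientGroup.mk (welt g h n) *
        (QuotientGroup.mk (celt g h) : T11crId G H) ^ n := by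
  have hsplit : welt g h (n + 1) =
      welt g h n *
        ⟨⁅(Coprod.inl g : Coprod G H) ^ n,
          ⁅(Coprod.inr h : Coprod G H) ^ n, Coprod.inl g⁆⁆, conjc_mem g h n n⟩ *
        cmelt g h n := by
    apply Subtype.ext
    show ((Coprod.inl g : Coprod G H) * Coprod.inr h) ^ (n + 1) *
        (Coprod.inr h : Coprod G H) ^ (-(n + 1)) * (Coprod.inl g : Coprod G H) ^ (-(n + 1)) =
      ((Coprod.inl g : Coprod G H) * Coprod.inr h) ^ n * (Coprod.inr h : Coprod G H) ^ (-n) *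
          (Coprod.inl g : Coprod G H) ^ (-n) *
        ⁅(Coprod.inl g : Coprod G H) ^ n, ⁅(Coprod.inr h : Coprod G H) ^ n, Coprod.inl g⁆⁆ *
        ⁅(Coprod.inr h : Coprod G H) ^ n, Coprod.inl g⁆
    rw [zpow_add_one ((Coprod.inl g : Coprod G H) * Coprod.inr h) n]
    simp only [commutatorElement_def]
    group
  rw [hsplit, QuotientGroup.mk_mul, QuotientGroup.mk_mul, t_conjc, mul_one, t_cm]

variable (G H)
theorem statement19 (G H : Type u) [Group G] [Group H] (g : G) (h : H) (n : ℤ) :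
    (QuotientGroup.mk
        (⟨((Coprod.inl g : Coprod G H) * Coprod.inr h) ^ n *
            (Coprod.inr h : Coprod G H) ^ (-n) * (Coprod.inl g : Coprod G H) ^ (-n),
          elt19_mem G H g h n⟩ : cr2Id G H) : T11crId G H) =
      QuotientGroup.mk
        (⟨⁅(Coprod.inr h : Coprod G H), Coprod.inl g⁆ ^ ((n * (n - 1)) / 2),
          comm_zpow_mem G H g h ((n * (n - 1)) / 2)⟩ : cr2Id G H) := by
  have key : ∀ k : ℤ, (QuotientGroup.mk (welt g h k) : T11crId G H) =
      (QuotientGroup.mk (celt g h) : T11crId G H) ^ ((k * (k - 1)) / 2) := by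
    intro k
    induction k using Int.induction_on with
    | zero =>
      rw [show ((0:ℤ) * (0 - 1)) / 2 = 0 by norm_num, zpow_zero,
        show welt g h 0 = 1 from Subtype.ext (by simp [welt])]
      exact QuotientGroup.mk_one _
    | succ m ih =>
      rw [t_w_step, ih, ← zpow_add]
      congr 1
      rw [show ((m:ℤ) + 1) * ((m:ℤ) + 1 - 1) = (m:ℤ) * ((m:ℤ) - 1) + 2 * (m:ℤ) from by ring]
      omega
    | pred m ih =>
      have h1 := t_w_step g h (-(m : ℤ) - 1)
      rw [show (-(m : ℤ) - 1 + 1) = -(m:ℤ) by ring, ih] at h1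
      have h2 : (QuotientGroup.mk (welt g h (-(m:ℤ) - 1)) : T11crId G H) =
          (QuotientGroup.mk (celt g h) : T11crId G H) ^ ((-(m:ℤ)) * (-(m:ℤ) - 1) / 2) *
            ((QuotientGroup.mk (celt g h) : T11crId G H) ^ (-(m:ℤ) - 1))⁻¹ := by
        rw [h1]; group
      rw [h2, ← zpow_neg, ← zpow_add]
      congr 1
      rw [show (-(m:ℤ) - 1) * (-(m:ℤ) - 1 - 1) = (-(m:ℤ)) * (-(m:ℤ) - 1) + 2 * ((m:ℤ) + 1)
        from by ring]
      omega
  have hk := key n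
  rw [show (QuotientGroup.mk (welt g h n) : T11crId G H) = QuotientGroup.mk
        (⟨((Coprod.inl g : Coprod G H) * Coprod.inr h) ^ n *
            (Coprod.inr h : Coprod G H) ^ (-n) * (Coprod.inl g : Coprod G H) ^ (-n),
          elt19_mem G H g h n⟩ : cr2Id G H) from rfl] at hk
  rw [hk, ← QuotientGroup.mk_zpow]
  exact congrArg QuotientGroup.mk (Subtype.ext (by simp [celt]))

end FreeProducts

end QF
end
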